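/- arXiv:2412.10171 — 3 statements merged into one kernel-verified Lean document; each statement's English description precedes it below -/
import Mathlib

section
/- Let ω(λ) = λ·cot(λπ) for λ = λ₁ + iλ₂ ∈ ℂ. For every compact interval [a,b] ⊂ ℝ there exist constants M > 0 and C > 0 such that for all λ with λ₁ ∈ [a,b] and |λ₂| ≥ M: Re ω(λ) > 0, the principal argument of ω(λ) satisfies arg ω(λ) = arctan[(λ₂ sin(2πλ₁) − λ₁ sinh(2πλ₂))/(λ₁ sin(2πλ₁) + λ₂ sinh(2πλ₂))], and |arg ω(λ)| ≤ C/|λ₂|. -/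
open Complex Filter Real

/-- `ω(λ) = λ·cot(λπ)`. -/
noncomputable def omegaFun (l : ℂ) : ℂ := l * Complex.cot (l * (π : ℂ))



lemma csin_re (z : ℂ) : (Complex.sin z).re = Real.sin z.re * Real.cosh z.im := by
  rw [Complex.sin_eq]; simp [Complex.sin_ofReal_re, Complex.cos_ofReal_re, Complex.sinh_ofReal_re, Complex.cosh_ofReal_re]
lemma csin_im (z : ℂ) : (Complex.sin z).im = Real.cos z.re * Real.sinh z.im := by
  rw [Complex.sin_eq]; simp [Complex.sin_ofReal_re, Complex.cos_ofReal_re, Complex.sinh_ofReal_re, Complex.cosh_ofReal_re]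
lemma ccos_re (z : ℂ) : (Complex.cos z).re = Real.cos z.re * Real.cosh z.im := by
  rw [Complex.cos_eq]; simp [Complex.sin_ofReal_re, Complex.cos_ofReal_re, Complex.sinh_ofReal_re, Complex.cosh_ofReal_re]
lemma ccos_im (z : ℂ) : (Complex.cos z).im = -(Real.sin z.re * Real.sinh z.im) := by
  rw [Complex.cos_eq]; simp [Complex.sin_ofReal_re, Complex.cos_ofReal_re, Complex.sinh_ofReal_re, Complex.cosh_ofReal_re]

lemma omega_comp (l : ℂ) (h : l.im ≠ 0) :
    (omegaFun l).re = (l.re * Real.sin (2*π*l.re) + l.im * Real.sinh (2*π*l.im)) /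
      (2*(Real.sin (π*l.re)^2 + Real.sinh (π*l.im)^2)) ∧
    (omegaFun l).im = (l.im * Real.sin (2*π*l.re) - l.re * Real.sinh (2*π*l.im)) /
      (2*(Real.sin (π*l.re)^2 + Real.sinh (π*l.im)^2)) := by
  have hS : Real.sinh (π*l.im) ≠ 0 := by
    simp [Real.sinh_eq_zero, Real.pi_ne_zero, h]
  have hD : (0:ℝ) < Real.sin (π*l.re)^2 + Real.sinh (π*l.im)^2 := by positivity
  have h1 := Real.cosh_sq_sub_sinh_sq (π*l.im)
  have h2 := Real.sin_sq_add_cos_sq (π*l.re)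
  have hnsq : Complex.normSq (Complex.sin (l * (π:ℂ))) =
      Real.sin (π*l.re)^2 + Real.sinh (π*l.im)^2 := by
    simp only [Complex.normSq_apply, csin_re, csin_im, Complex.mul_re, Complex.mul_im,
      Complex.ofReal_re, Complex.ofReal_im, mul_zero, zero_mul, sub_zero, add_zero, zero_add,
      mul_comm l.re π, mul_comm l.im π]
    linear_combination (Real.sin (π*l.re))^2 * h1 + (Real.sinh (π*l.im))^2 * h2
  unfold omegaFun
  rw [Complex.cot_eq_cos_div_sin, mul_div_assoc']
  rw [show 2*π*l.re = 2*(π*l.re) by ring, show 2*π*l.im = 2*(π*l.im) by ring,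
    Real.sin_two_mul, Real.sinh_two_mul]
  constructor
  · rw [Complex.div_re, hnsq]
    simp only [Complex.mul_re, Complex.mul_im, csin_re, csin_im, ccos_re, ccos_im,
      Complex.ofReal_re, Complex.ofReal_im, mul_zero, zero_mul, sub_zero, add_zero, zero_add,
      mul_comm l.re π, mul_comm l.im π]
    rw [← add_div, div_eq_div_iff (ne_of_gt hD) (by positivity)]
    linear_combination (2*(Real.sin (π*l.re)^2 + Real.sinh (π*l.im)^2)) *
        ((l.re * Real.sin (π*l.re) * Real.cos (π*l.re)) * h1 +
         (l.im * Real.sinh (π*l.im) * Real.cosh (π*l.im)) * h2)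
  · rw [Complex.div_im, hnsq]
    simp only [Complex.mul_re, Complex.mul_im, csin_re, csin_im, ccos_re, ccos_im,
      Complex.ofReal_re, Complex.ofReal_im, mul_zero, zero_mul, sub_zero, add_zero, zero_add,
      mul_comm l.re π, mul_comm l.im π]
    rw [div_sub_div_same, div_eq_div_iff (ne_of_gt hD) (by positivity)]
    linear_combination (2*(Real.sin (π*l.re)^2 + Real.sinh (π*l.im)^2)) *
        ((l.im * Real.sin (π*l.re) * Real.cos (π*l.re)) * h1 -
         (l.re * Real.sinh (π*l.im) * Real.cosh (π*l.im)) * h2)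

lemma abs_arctan_le' (t : ℝ) : |Real.arctan t| ≤ |t| := by
  have key : ∀ u : ℝ, 0 ≤ u → Real.arctan u ≤ u := by
    intro u hu
    rcases eq_or_lt_of_le hu with h | h
    · simp [← h]
    · have h1 : 0 < Real.arctan u := by
        have := Real.arctan_strictMono h
        rwa [Real.arctan_zero] at this
      have h2 := Real.arctan_lt_pi_div_two u
      have h3 := Real.lt_tan h1 h2
      rw [Real.tan_arctan] at h3
      linarith
  rcases le_or_gt 0 t with h | h
  · have h0 : 0 ≤ Real.arctan t := by
      have := Real.arctan_strictMono.monotone h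
      rwa [Real.arctan_zero] at this
    rw [_root_.abs_of_nonneg h, _root_.abs_of_nonneg h0]
    exact key t h
  · have h0 : Real.arctan t ≤ 0 := by
      have := Real.arctan_strictMono.monotone h.le
      rwa [Real.arctan_zero] at this
    rw [_root_.abs_of_neg h, _root_.abs_of_nonpos h0]
    have := key (-t) (by linarith)
    rw [Real.arctan_neg] at this
    linarith


set_option maxHeartbeats 1000000 in
/-- for `ω(λ) = λ·cot(λπ)` and every compact interval `[a,b] ⊂ ℝ` there
are constants `M, C > 0` such that for all `λ = λ₁ + iλ₂` with `λ₁ ∈ [a,b]` and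
`|λ₂| ≥ M`: `Re ω(λ) > 0`, the principal argument of `ω(λ)` equals
`arctan[(λ₂ sin(2πλ₁) - λ₁ sinh(2πλ₂))/(λ₁ sin(2πλ₁) + λ₂ sinh(2πλ₂))]`, and
`|arg ω(λ)| ≤ C/|λ₂|`. -/
theorem stmt7 (a b : ℝ) (hab : a ≤ b) :
    ∃ M > (0 : ℝ), ∃ C > (0 : ℝ), ∀ l : ℂ, l.re ∈ Set.Icc a b → M ≤ |l.im| →
      0 < (omegaFun l).re ∧
      Complex.arg (omegaFun l) =
        Real.arctan ((l.im * Real.sin (2 * π * l.re) - l.re * Real.sinh (2 * π * l.im)) /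
          (l.re * Real.sin (2 * π * l.re) + l.im * Real.sinh (2 * π * l.im))) ∧
      |Complex.arg (omegaFun l)| ≤ C / |l.im| := by
  set K : ℝ := |a| + |b| + 1 with hKdef
  have hK1 : 1 ≤ K := by
    have := abs_nonneg a; have := abs_nonneg b; simp only [hKdef]; linarith
  refine ⟨K + 1, by linarith, 1 + 2*K, by linarith, ?_⟩
  intro l hx hy
  have hπ := Real.pi_gt_three
  have hy0 : (0:ℝ) < |l.im| := by linarith
  have hyne : l.im ≠ 0 := by
    intro h0; rw [h0] at hy0; simp at hy0
  obtain ⟨hre, him⟩ := omega_comp l hyne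
  have hxb : |l.re| ≤ K := by
    have h1 := hx.1; have h2 := hx.2
    have := neg_abs_le a; have := le_abs_self b
    have := abs_nonneg a; have := abs_nonneg b
    rw [abs_le]; constructor <;> simp only [hKdef] <;> linarith
  set y := l.im with hydef
  set x := l.re with hxdef
  set s2 : ℝ := Real.sinh (2*π*|y|) with hs2def
  have hsinh_eq : y * Real.sinh (2*π*y) = |y| * s2 := by
    rcases le_or_gt 0 y with h | h
    · rw [hs2def, _root_.abs_of_nonneg h]
    · rw [hs2def, _root_.abs_of_neg h, show 2*π*(-y) = -(2*π*y) by ring, Real.sinh_neg]; ring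
  have habs_sinh : |Real.sinh (2*π*y)| = s2 := by
    rw [Real.abs_sinh, hs2def, abs_mul, abs_of_pos (by positivity : (0:ℝ) < 2*π)]
  have hs2low : 2*π*|y| ≤ s2 := Real.self_le_sinh_iff.mpr (by positivity)
  have hs2pos : 0 < s2 := lt_of_lt_of_le (by positivity) hs2low
  have h6 : 2*π*|y| * |y| ≤ s2 * |y| := mul_le_mul_of_nonneg_right hs2low hy0.le
  have h7 : (K+1)*(K+1) ≤ |y| * |y| := mul_le_mul hy hy (by linarith) hy0.le
  have hA : 6*(|y| * |y|) ≤ |y| * s2 := by nlinarith [sq_nonneg y, abs_nonneg y]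
  set P : ℝ := x * Real.sin (2*π*x) + y * Real.sinh (2*π*y) with hPdef
  set Q : ℝ := y * Real.sin (2*π*x) - x * Real.sinh (2*π*y) with hQdef
  have hsin1 : |Real.sin (2*π*x)| ≤ 1 := Real.abs_sin_le_one _
  have hterm : |x * Real.sin (2*π*x)| ≤ K := by
    rw [abs_mul]
    calc |x| * |Real.sin (2*π*x)| ≤ K * 1 :=
          mul_le_mul hxb hsin1 (abs_nonneg _) (by linarith)
      _ = K := mul_one K
  have hPge : |y| * s2 - K ≤ P := by
    have := (abs_le.mp hterm).1
    rw [hPdef, hsinh_eq]; linarith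
  have hKK : 0 ≤ K*K := mul_nonneg (by linarith) (by linarith)
  have hhalf : K + K ≤ |y| * s2 := by nlinarith [hA, h7, hKK]
  have hPpos : 0 < P := by nlinarith [hPge, hhalf, hK1]
  have hSne : Real.sinh (π*y) ≠ 0 := by
    simp [Real.sinh_eq_zero, Real.pi_ne_zero, hyne]
  have hDpos : (0:ℝ) < 2*(Real.sin (π*x)^2 + Real.sinh (π*y)^2) := by positivity
  have hrepos : 0 < (omegaFun l).re := by
    rw [hre]; exact div_pos hPpos hDpos
  refine ⟨hrepos, ?_, ?_⟩
  · have hω0 : omegaFun l ≠ 0 := by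
      intro h0; rw [h0] at hrepos; simp at hrepos
    have harg : |Complex.arg (omegaFun l)| < π/2 :=
      Complex.abs_arg_lt_pi_div_two_iff.mpr (Or.inl hrepos)
    have harg' := abs_lt.mp harg
    have : Complex.arg (omegaFun l) = Real.arctan (Real.tan (Complex.arg (omegaFun l))) :=
      (Real.arctan_tan (by linarith [harg'.1]) harg'.2).symm
    rw [this, Complex.tan_arg, hre, him]
    congr 1
    rw [div_div_div_eq]
    rw [mul_comm _ P, mul_div_mul_right _ _ (ne_of_gt hDpos)]
  · have hQbound : |Q| ≤ |y| + K * s2 := by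
      calc |Q| ≤ |y * Real.sin (2*π*x)| + |x * Real.sinh (2*π*y)| := abs_sub _ _
        _ ≤ |y| + K * s2 := by
            rw [abs_mul, abs_mul, habs_sinh]
            have h1 : |y| * |Real.sin (2*π*x)| ≤ |y| * 1 :=
              mul_le_mul_of_nonneg_left hsin1 (abs_nonneg y)
            have h2 : |x| * s2 ≤ K * s2 := mul_le_mul_of_nonneg_right hxb hs2pos.le
            linarith
    have hargeq : Complex.arg (omegaFun l) = Real.arctan (Q / P) := by
      have hω0 : omegaFun l ≠ 0 := by
        intro h0; rw [h0] at hrepos; simp at hrepos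
      have harg : |Complex.arg (omegaFun l)| < π/2 :=
        Complex.abs_arg_lt_pi_div_two_iff.mpr (Or.inl hrepos)
      have harg' := abs_lt.mp harg
      have : Complex.arg (omegaFun l) = Real.arctan (Real.tan (Complex.arg (omegaFun l))) :=
        (Real.arctan_tan (by linarith [harg'.1]) harg'.2).symm
      rw [this, Complex.tan_arg, hre, him]
      congr 1
      rw [div_div_div_eq]
      rw [mul_comm _ P, mul_div_mul_right _ _ (ne_of_gt hDpos)]
    rw [hargeq]
    calc |Real.arctan (Q / P)| ≤ |Q / P| := abs_arctan_le' _
      _ = |Q| / P := by rw [abs_div, _root_.abs_of_pos hPpos]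
      _ ≤ (1 + 2*K) / |y| := by
          rw [div_le_div_iff₀ hPpos hy0]
          have hm1 : |Q| * |y| ≤ (|y| + K * s2) * |y| :=
            mul_le_mul_of_nonneg_right hQbound (abs_nonneg y)
          have hm2 : (1 + 2*K) * (|y| * s2 - K) ≤ (1 + 2*K) * P :=
            mul_le_mul_of_nonneg_left hPge (by linarith)
          nlinarith [mul_nonneg (by linarith : (0:ℝ) ≤ K) (mul_pos hy0 hs2pos).le]
end

section
/- Let ϑ ∈ (0,1) and σ ∈ (max{−1/2, −ϑ}, 3/2 − ϑ). There exists M₀ > 0 such that for all M ≥ M₀ there are constants ε ∈ (0, π/2) and C = C(M, σ, ϑ) with |Φ(s,ζ)| ≤ C e^{−(π/2−ε)|η|} e^{−(π/4)|τ|} whenever s = σ + iτ, ζ = ϑ + iη and (η,τ) belongs to Σ₃ ∪ Σ₅ ∪ Σ₉ ∪ Σ₁₁, where Σ₃ = {M−τ < η < −τ/2, τ > 2M}, Σ₅ = {−(3/2)τ < η < −M−τ, τ > 2M}, Σ₉ = {−τ/2 < η < −τ−M, τ < −2M}, Σ₁₁ = {M−τ < η < −(3/2)τ, τ < −2M}.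 -/
set_option maxHeartbeats 1000000


open Complex Filter Real

/-- The `n`-th factor of the infinite product defining `K`. -/
noncomputable def Kterm (n : ℕ) (l : ℂ) : ℂ :=
  Complex.Gamma ((n : ℂ) - 1/2 + l) * Complex.Gamma ((n : ℂ) + 1 - l) /
    (Complex.Gamma ((n : ℂ) + 1/2 - l) * Complex.Gamma ((n : ℂ) + l)) *
    ((n : ℂ) / ((n : ℂ) - 1/2)) ^ (2 * l - 1)

/-- `K` as the value of the infinite product (convergent on `-1/2 < Re λ < 2`). -/
noncomputable def Kfun (l : ℂ) : ℂ := ∏' n : ℕ, Kterm (n + 1) l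

/-- `Φ(s,ζ) = [K(s)/((s+ζ)K(s+ζ))]·1/(e^{iπζ} - e^{-iπζ})`. -/
noncomputable def Phi (s ζ : ℂ) : ℂ :=
  Kfun s / ((s + ζ) * Kfun (s + ζ)) /
    (Complex.exp (Complex.I * (π : ℂ) * ζ) - Complex.exp (-(Complex.I * (π : ℂ) * ζ)))

noncomputable def rbar (x : ℝ) : ℝ := min x (min (1-x) 0)
noncomputable def e0 (x : ℝ) : ℝ := 1/2 + rbar x
noncomputable def LL (x : ℝ) (s : ℕ) : ℝ := (s:ℝ) - 1/2 + rbar x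
noncomputable def Gb (x t : ℝ) (s : ℕ) : ℝ :=
  2*t^2/((LL x s)^2*((LL x s)^2+t^2)) + (2*(LL x s)+5)/(LL x s)^4

lemma rbar_le_zero (x : ℝ) : rbar x ≤ 0 :=
  le_trans (min_le_right _ _) (min_le_right _ _)
lemma neg_half_lt_rbar {x : ℝ} (hx1 : -(1/2) < x) (hx2 : x < 3/2) : -(1/2) < rbar x := by
  simp only [rbar, lt_min_iff]
  refine ⟨hx1, by linarith, by norm_num⟩
lemma e0_pos {x : ℝ} (hx1 : -(1/2) < x) (hx2 : x < 3/2) : 0 < e0 x := by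
  have := neg_half_lt_rbar hx1 hx2; simp only [e0]; linarith
lemma e0_le_one (x : ℝ) : e0 x ≤ 1 := by
  have := rbar_le_zero x; simp only [e0]; linarith

lemma LL_eq (x : ℝ) (s : ℕ) : LL x s = (s:ℝ) - 1 + e0 x := by
  simp only [LL, e0]; ring

lemma LL_lower {x : ℝ} (hx1 : -(1/2) < x) (hx2 : x < 3/2) {s : ℕ} (hs : 1 ≤ s) :
    e0 x * s ≤ LL x s := by
  have h1 : (1:ℝ) ≤ (s:ℝ) := by exact_mod_cast hs
  have h2 := e0_pos hx1 hx2
  have h3 := e0_le_one x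
  rw [LL_eq]; nlinarith

lemma LL_pos {x : ℝ} (hx1 : -(1/2) < x) (hx2 : x < 3/2) {s : ℕ} (hs : 1 ≤ s) :
    0 < LL x s := by
  have := LL_lower hx1 hx2 hs
  have h1 : (1:ℝ) ≤ (s:ℝ) := by exact_mod_cast hs
  nlinarith [e0_pos hx1 hx2]

lemma LL_le (x : ℝ) (s : ℕ) : LL x s ≤ (s:ℝ) := by
  have := rbar_le_zero x; simp only [LL]; linarith

lemma Gb_nonneg {x : ℝ} (hx1 : -(1/2) < x) (hx2 : x < 3/2) (t : ℝ) (s : ℕ) :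
    0 ≤ Gb x t s := by
  have hr := neg_half_lt_rbar hx1 hx2
  have h25 : 0 ≤ 2*(LL x s)+5 := by
    simp only [LL]
    have : (0:ℝ) ≤ (s:ℝ) := Nat.cast_nonneg s
    linarith
  have h1 : 0 ≤ 2*t^2/((LL x s)^2*((LL x s)^2+t^2)) := by positivity
  have h2 : 0 ≤ (2*(LL x s)+5)/(LL x s)^4 := div_nonneg h25 (by positivity)
  simp only [Gb]; linarith

lemma Gb_le_sq {x : ℝ} (hx1 : -(1/2) < x) (hx2 : x < 3/2) (t : ℝ) {s : ℕ} (hs : 1 ≤ s) :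
    Gb x t s ≤ (2 + 2/(e0 x) + 5/(e0 x)^2) * (1/(LL x s)^2) := by
  have hL := LL_pos hx1 hx2 hs
  have he := e0_pos hx1 hx2
  have heL : e0 x ≤ LL x s := by
    have := LL_lower hx1 hx2 hs
    have h1 : (1:ℝ) ≤ (s:ℝ) := by exact_mod_cast hs
    nlinarith
  have h1 : 2*t^2/((LL x s)^2*((LL x s)^2+t^2)) ≤ 2/(LL x s)^2 := by
    rw [div_le_div_iff₀ (by positivity) (by positivity)]
    nlinarith [sq_nonneg t, sq_nonneg (LL x s)]
  have h2 : (2*(LL x s)+5)/(LL x s)^4 ≤ (2/(e0 x) + 5/(e0 x)^2)/(LL x s)^2 := by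
    rw [div_le_div_iff₀ (by positivity) (by positivity)]
    have e1 : 2*(LL x s)*(LL x s)^2*(e0 x) ≤ 2*(LL x s)^4 := by
      nlinarith [mul_le_mul_of_nonneg_left heL (by positivity : (0:ℝ) ≤ 2*(LL x s)^3)]
    have e2 : 5*(LL x s)^2*(e0 x)^2 ≤ 5*(LL x s)^4 := by nlinarith
    have hee : (0:ℝ) < (e0 x)^2 := by positivity
    rw [div_add_div _ _ (ne_of_gt he) (ne_of_gt hee)]
    rw [div_mul_eq_mul_div, le_div_iff₀ (by positivity)]
    nlinarith
  simp only [Gb]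
  have expand : (2 + 2/(e0 x) + 5/(e0 x)^2) * (1/(LL x s)^2)
      = 2/(LL x s)^2 + (2/(e0 x) + 5/(e0 x)^2)/(LL x s)^2 := by ring
  rw [expand]; linarith

lemma summable_inv_sq_succ : Summable (fun j : ℕ => 1/((j:ℝ)+1)^2) := by
  have h : Summable (fun n : ℕ => 1/(n:ℝ)^2) := by
    simpa using Real.summable_one_div_nat_pow.mpr (by norm_num : 1 < 2)
  have := (summable_nat_add_iff 1).mpr h
  simpa using this

lemma summable_Gb {x : ℝ} (hx1 : -(1/2) < x) (hx2 : x < 3/2) (t : ℝ) {n1 : ℕ} (hn1 : 1 ≤ n1) :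
    Summable (fun j : ℕ => Gb x t (n1+j)) := by
  have he := e0_pos hx1 hx2
  refine Summable.of_nonneg_of_le (fun j => Gb_nonneg hx1 hx2 t _) (fun j => ?_)
    (summable_inv_sq_succ.mul_left ((2 + 2/(e0 x) + 5/(e0 x)^2)/(e0 x)^2))
  · 
    have hs : 1 ≤ n1 + j := le_trans hn1 (Nat.le_add_right _ _)
    have h1 := Gb_le_sq hx1 hx2 t hs
    have hLlow : e0 x * ((j:ℝ)+1) ≤ LL x (n1+j) := by
      have := LL_lower hx1 hx2 hs
      have hc : ((j:ℝ)+1) ≤ ((n1+j:ℕ):ℝ) := by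
        push_cast
        have : (1:ℝ) ≤ (n1:ℝ) := by exact_mod_cast hn1
        linarith
      nlinarith
    have hL := LL_pos hx1 hx2 hs
    have h2 : 1/(LL x (n1+j))^2 ≤ 1/((e0 x)*((j:ℝ)+1))^2 :=
      one_div_le_one_div_of_le (by positivity) (pow_le_pow_left₀ (by positivity) hLlow 2)
    have h3 : 1/((e0 x)*((j:ℝ)+1))^2 = (1/(e0 x)^2) * (1/((j:ℝ)+1)^2) := by
      rw [mul_pow]; rw [one_div, one_div, one_div, mul_inv]
    have hnn : (0:ℝ) ≤ 2 + 2/(e0 x) + 5/(e0 x)^2 := by positivity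
    calc Gb x t (n1+j) ≤ (2 + 2/(e0 x) + 5/(e0 x)^2) * (1/(LL x (n1+j))^2) := h1
      _ ≤ (2 + 2/(e0 x) + 5/(e0 x)^2) * ((1/(e0 x)^2) * (1/((j:ℝ)+1)^2)) := by
          apply mul_le_mul_of_nonneg_left _ hnn
          rw [← h3]; exact h2
      _ = ((2 + 2/(e0 x) + 5/(e0 x)^2)/(e0 x)^2) * (1/((j:ℝ)+1)^2) := by ring
section DEV3B
variable (x t : ℝ)

lemma f_sb1_nonneg (t : ℝ) (m : ℕ) : 0 ≤ t^2/((m:ℝ)*((m:ℝ)^2+t^2)) := by positivity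

lemma sb1_step (t : ℝ) (j : ℕ) :
    t^2/(((j:ℝ)+2)*(((j:ℝ)+2)^2+t^2))
      ≤ Real.log (1+t^2/((j:ℝ)+1)^2) - Real.log (1+t^2/((j:ℝ)+2)^2) := by
  set m : ℝ := (j:ℝ)+1 with hm
  have hm1 : 1 ≤ m := by
    have hj : (0:ℝ) ≤ (j:ℝ) := Nat.cast_nonneg j
    rw [hm]; linarith
  have hm0 : 0 < m := by linarith
  have ha : 0 < 1+t^2/m^2 := by positivity
  have hb : 0 < 1+t^2/(m+1)^2 := by positivity
  have hlog : Real.log (1+t^2/(m+1)^2) - Real.log (1+t^2/m^2) ≤ (1+t^2/(m+1)^2)/(1+t^2/m^2) - 1 := by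
    have := Real.log_le_sub_one_of_pos (show 0 < (1+t^2/(m+1)^2)/(1+t^2/m^2) by positivity)
    rwa [Real.log_div (ne_of_gt hb) (ne_of_gt ha)] at this
  have he : (1+t^2/(m+1)^2)/(1+t^2/m^2) - 1 = -(t^2*(2*m+1)/((m+1)^2*(m^2+t^2))) := by
    rw [div_sub_one (ne_of_gt ha)]
    field_simp
    ring
  have hfin : t^2/((m+1)*((m+1)^2+t^2)) ≤ t^2*(2*m+1)/((m+1)^2*(m^2+t^2)) := by
    rw [div_le_div_iff₀ (by positivity) (by positivity)]
    nlinarith [sq_nonneg t, sq_nonneg m, sq_nonneg (t*m), sq_nonneg (t^2)]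
  have harg : (j:ℝ)+2 = m+1 := by rw [hm]; ring
  rw [harg]
  linarith [he ▸ hlog]

lemma sb1 (t : ℝ) : ∑' m:ℕ, t^2/((m:ℝ)*((m:ℝ)^2+t^2)) ≤ 1 + Real.log (1+t^2) := by
  apply Real.tsum_le_of_sum_range_le (f_sb1_nonneg t)
  intro N
  have hmono : ∑ m ∈ Finset.range N, t^2/((m:ℝ)*((m:ℝ)^2+t^2))
      ≤ ∑ m ∈ Finset.range (N+2), t^2/((m:ℝ)*((m:ℝ)^2+t^2)) := by
    apply Finset.sum_le_sum_of_subset_of_nonneg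
    · exact Finset.range_subset_range.mpr (by omega)
    · intro i _ _; exact f_sb1_nonneg t i
  refine le_trans hmono ?_
  rw [Finset.sum_range_succ', Finset.sum_range_succ']
  have h0 : t^2/(((0:ℕ):ℝ)*(((0:ℕ):ℝ)^2+t^2)) = 0 := by norm_num
  have h1 : t^2/(((0+1:ℕ):ℝ)*(((0+1:ℕ):ℝ)^2+t^2)) ≤ 1 := by
    push_cast
    rw [div_le_one (by positivity : (0:ℝ) < 1*(1^2+t^2))]
    nlinarith [sq_nonneg t]
  have htel : ∑ j ∈ Finset.range N, t^2/(((j+1+1:ℕ):ℝ)*(((j+1+1:ℕ):ℝ)^2+t^2))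
      ≤ Real.log (1+t^2) := by
    have hstep : ∀ j ∈ Finset.range N, t^2/(((j+1+1:ℕ):ℝ)*(((j+1+1:ℕ):ℝ)^2+t^2))
        ≤ (fun i : ℕ => Real.log (1+t^2/((i:ℝ)+1)^2)) j - (fun i : ℕ => Real.log (1+t^2/((i:ℝ)+1)^2)) (j+1) := by
      intro j _
      have h := sb1_step t j
      have hc : ((j+1+1:ℕ):ℝ) = (j:ℝ)+2 := by push_cast; ring
      have hc2 : ((j+1:ℕ):ℝ)+1 = (j:ℝ)+2 := by push_cast; ring
      simp only [hc, hc2]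
      exact h
    refine le_trans (Finset.sum_le_sum hstep) ?_
    rw [Finset.sum_range_sub' (fun i : ℕ => Real.log (1+t^2/((i:ℝ)+1)^2)) N]
    have hnn : 0 ≤ Real.log (1+t^2/((N:ℝ)+1)^2) := by
      apply Real.log_nonneg
      have h1 : 0 ≤ t^2/((N:ℝ)+1)^2 := by positivity
      linarith
    have hlog0 : ((0:ℕ):ℝ) + 1 = 1 := by norm_num
    simp only [hlog0]
    rw [show ((1:ℝ))^2 = 1 by norm_num, div_one]
    linarith
  rw [h0]
  linarith

lemma sb2 : ∑' m:ℕ, 1/((m:ℝ))^2 ≤ 2 := by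
  apply Real.tsum_le_of_sum_range_le (fun m => by positivity)
  intro N
  have hmono : ∑ m ∈ Finset.range N, 1/((m:ℝ))^2 ≤ ∑ m ∈ Finset.range (N+2), 1/((m:ℝ))^2 := by
    apply Finset.sum_le_sum_of_subset_of_nonneg
    · exact Finset.range_subset_range.mpr (by omega)
    · intro i _ _; positivity
  refine le_trans hmono ?_
  rw [Finset.sum_range_succ', Finset.sum_range_succ']
  have h0 : 1/(((0:ℕ):ℝ))^2 = 0 := by norm_num
  have h1 : 1/(((0+1:ℕ):ℝ))^2 = 1 := by norm_num
  have htel : ∑ j ∈ Finset.range N, 1/(((j+1+1:ℕ):ℝ))^2 ≤ 1 := by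
    have hstep : ∀ j ∈ Finset.range N, 1/(((j+1+1:ℕ):ℝ))^2
        ≤ (fun i : ℕ => 1/((i:ℝ)+1)) j - (fun i : ℕ => 1/((i:ℝ)+1)) (j+1) := by
      intro j _
      have hc : ((j+1+1:ℕ):ℝ) = (j:ℝ)+2 := by push_cast; ring
      have hc2 : ((j+1:ℕ):ℝ)+1 = (j:ℝ)+2 := by push_cast; ring
      simp only [hc, hc2]
      rw [div_sub_div _ _ (by positivity : (j:ℝ)+1 ≠ 0) (by positivity : (j:ℝ)+2 ≠ 0)]
      rw [div_le_div_iff₀ (by positivity) (by positivity)]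
      have hj : (0:ℝ) ≤ (j:ℝ) := Nat.cast_nonneg j
      nlinarith
    refine le_trans (Finset.sum_le_sum hstep) ?_
    rw [Finset.sum_range_sub' (fun i : ℕ => 1/((i:ℝ)+1)) N]
    have h1 : 0 ≤ 1/((N:ℝ)+1) := by positivity
    have h2 : ((0:ℕ):ℝ)+1 = 1 := by norm_num
    rw [h2]
    norm_num
    linarith
  rw [h0, h1]
  linarith
end DEV3B
section DEV3D

lemma summable_f1 (t : ℝ) : Summable (fun m : ℕ => t^2/((m:ℝ)*((m:ℝ)^2+t^2))) := by
  refine Summable.of_nonneg_of_le (f_sb1_nonneg t) (fun m => ?_)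
    ((Real.summable_one_div_nat_pow.mpr (by norm_num : 1 < 2)).mul_left (t^2))
  rcases Nat.eq_zero_or_pos m with hm | hm
  · subst hm; norm_num
  · have hm1 : (1:ℝ) ≤ (m:ℝ) := by exact_mod_cast hm
    have h1 : t^2/((m:ℝ)*((m:ℝ)^2+t^2)) ≤ t^2/((m:ℝ)^2) := by
      apply div_le_div_of_nonneg_left (sq_nonneg t) (by positivity)
      nlinarith [sq_nonneg t]
    calc t^2/((m:ℝ)*((m:ℝ)^2+t^2)) ≤ t^2/((m:ℝ)^2) := h1
      _ = t^2 * (1/(m:ℝ)^2) := by ring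

lemma summable_mGb {x : ℝ} (hx1 : -(1/2) < x) (hx2 : x < 3/2) (t : ℝ) :
    Summable (fun m : ℕ => (m:ℝ) * Gb x t m) := by
  have he := e0_pos hx1 hx2
  refine Summable.of_nonneg_of_le
    (fun m => mul_nonneg (Nat.cast_nonneg m) (Gb_nonneg hx1 hx2 t m)) (fun m => ?_)
    ((Real.summable_one_div_nat_pow.mpr (by norm_num : 1 < 2)).mul_left ((2*t^2+7)/(e0 x)^4))
  rcases Nat.eq_zero_or_pos m with hm | hm
  · subst hm; norm_num
  · have hm1 : (1:ℝ) ≤ (m:ℝ) := by exact_mod_cast hm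
    have hL := LL_pos hx1 hx2 hm
    have hLlow := LL_lower hx1 hx2 hm
    have hLle := LL_le x m
    have he1 := e0_le_one x
    have hL2 : (e0 x)^2*(m:ℝ)^2 ≤ (LL x m)^2 := by
      nlinarith [pow_le_pow_left₀ (by positivity : (0:ℝ) ≤ e0 x * (m:ℝ)) hLlow 2]
    have he2 : (e0 x)^2 ≤ 1 := by nlinarith
    have hL2t : (e0 x)^2*((m:ℝ)^2+t^2) ≤ (LL x m)^2+t^2 := by
      nlinarith [hL2, mul_le_mul_of_nonneg_right he2 (sq_nonneg t)]
    have hprod : (e0 x)^4*((m:ℝ)^2*((m:ℝ)^2+t^2)) ≤ (LL x m)^2*((LL x m)^2+t^2) := by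
      have := mul_le_mul hL2 hL2t (by positivity) (sq_nonneg (LL x m))
      nlinarith [this]
    have hb1 : (m:ℝ)*(2*t^2/((LL x m)^2*((LL x m)^2+t^2))) ≤ (2*t^2/(e0 x)^4) * (1/(m:ℝ)^2) := by
      have h1 : 2*t^2/((LL x m)^2*((LL x m)^2+t^2)) ≤ 2*t^2/((e0 x)^4*((m:ℝ)^2*((m:ℝ)^2+t^2))) := by
        apply div_le_div_of_nonneg_left (by positivity) (by positivity) hprod
      have h2 : (m:ℝ) * (2*t^2/((e0 x)^4*((m:ℝ)^2*((m:ℝ)^2+t^2)))) ≤ (2*t^2/(e0 x)^4) * (1/(m:ℝ)^2) := by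
        rw [show (m:ℝ)*(2*t^2/((e0 x)^4*((m:ℝ)^2*((m:ℝ)^2+t^2)))) = 2*t^2*(m:ℝ)/((e0 x)^4*((m:ℝ)^2*((m:ℝ)^2+t^2))) from by ring,
          show (2*t^2/(e0 x)^4)*(1/(m:ℝ)^2) = 2*t^2/((e0 x)^4*(m:ℝ)^2) from by ring]
        rw [div_le_div_iff₀ (by positivity) (by positivity)]
        nlinarith [mul_le_mul_of_nonneg_left (show (m:ℝ) ≤ (m:ℝ)^2+t^2 by nlinarith [sq_nonneg t])
          (by positivity : (0:ℝ) ≤ 2*t^2*(e0 x)^4*(m:ℝ)^2)]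
      calc (m:ℝ)*(2*t^2/((LL x m)^2*((LL x m)^2+t^2)))
          ≤ (m:ℝ)*(2*t^2/((e0 x)^4*((m:ℝ)^2*((m:ℝ)^2+t^2)))) :=
            mul_le_mul_of_nonneg_left h1 (Nat.cast_nonneg m)
        _ ≤ (2*t^2/(e0 x)^4) * (1/(m:ℝ)^2) := h2
    have hb2 : (m:ℝ)*((2*(LL x m)+5)/(LL x m)^4) ≤ (7/(e0 x)^4) * (1/(m:ℝ)^2) := by
      have hnum : 2*(LL x m)+5 ≤ 7*(m:ℝ) := by nlinarith
      have hden : (e0 x)^4*(m:ℝ)^4 ≤ (LL x m)^4 := by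
          nlinarith [pow_le_pow_left₀ (by positivity : (0:ℝ) ≤ (e0 x)^2*(m:ℝ)^2) hL2 2]
      have h1 : (2*(LL x m)+5)/(LL x m)^4 ≤ (7*(m:ℝ))/((e0 x)^4*(m:ℝ)^4) := by
        apply div_le_div₀ (by positivity) hnum (by positivity) hden
      calc (m:ℝ)*((2*(LL x m)+5)/(LL x m)^4) ≤ (m:ℝ)*((7*(m:ℝ))/((e0 x)^4*(m:ℝ)^4)) :=
            mul_le_mul_of_nonneg_left h1 (Nat.cast_nonneg m)
        _ = (7/(e0 x)^4) * (1/(m:ℝ)^2) := by field_simp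
    calc (m:ℝ) * Gb x t m = (m:ℝ)*(2*t^2/((LL x m)^2*((LL x m)^2+t^2))) + (m:ℝ)*((2*(LL x m)+5)/(LL x m)^4) := by
          simp only [Gb]; ring
      _ ≤ (2*t^2/(e0 x)^4) * (1/(m:ℝ)^2) + (7/(e0 x)^4) * (1/(m:ℝ)^2) := add_le_add hb1 hb2
      _ = ((2*t^2+7)/(e0 x)^4) * (1/(m:ℝ)^2) := by ring

lemma tsum_mGb_le {x : ℝ} (hx1 : -(1/2) < x) (hx2 : x < 3/2) (t : ℝ) :
    ∑' m:ℕ, (m:ℝ) * Gb x t m ≤ (2/(e0 x)^4) * (8 + Real.log (1+t^2)) := by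
  have he := e0_pos hx1 hx2
  have key : ∀ m : ℕ, (m:ℝ) * Gb x t m
      ≤ (2/(e0 x)^4) * (t^2/((m:ℝ)*((m:ℝ)^2+t^2))) + (7/(e0 x)^4) * (1/(m:ℝ)^2) := by
    intro m
    rcases Nat.eq_zero_or_pos m with hm | hm
    · subst hm; norm_num
    · have hm1 : (1:ℝ) ≤ (m:ℝ) := by exact_mod_cast hm
      have hL := LL_pos hx1 hx2 hm
      have hLlow := LL_lower hx1 hx2 hm
      have hLle := LL_le x m
      have he1 := e0_le_one x
      have hL2 : (e0 x)^2*(m:ℝ)^2 ≤ (LL x m)^2 := by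
        nlinarith [pow_le_pow_left₀ (by positivity : (0:ℝ) ≤ e0 x * (m:ℝ)) hLlow 2]
      have he2 : (e0 x)^2 ≤ 1 := by nlinarith
      have hL2t : (e0 x)^2*((m:ℝ)^2+t^2) ≤ (LL x m)^2+t^2 := by
        nlinarith [hL2, mul_le_mul_of_nonneg_right he2 (sq_nonneg t)]
      have hprod : (e0 x)^4*((m:ℝ)^2*((m:ℝ)^2+t^2)) ≤ (LL x m)^2*((LL x m)^2+t^2) := by
        have := mul_le_mul hL2 hL2t (by positivity) (sq_nonneg (LL x m))
        nlinarith [this]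
      have hb1 : (m:ℝ)*(2*t^2/((LL x m)^2*((LL x m)^2+t^2))) ≤ (2/(e0 x)^4) * (t^2/((m:ℝ)*((m:ℝ)^2+t^2))) := by
        have h1 : 2*t^2/((LL x m)^2*((LL x m)^2+t^2)) ≤ 2*t^2/((e0 x)^4*((m:ℝ)^2*((m:ℝ)^2+t^2))) :=
          div_le_div_of_nonneg_left (by positivity) (by positivity) hprod
        have h2 : (m:ℝ)*(2*t^2/((e0 x)^4*((m:ℝ)^2*((m:ℝ)^2+t^2)))) = (2/(e0 x)^4) * (t^2/((m:ℝ)*((m:ℝ)^2+t^2))) := by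
          field_simp
        calc (m:ℝ)*(2*t^2/((LL x m)^2*((LL x m)^2+t^2)))
            ≤ (m:ℝ)*(2*t^2/((e0 x)^4*((m:ℝ)^2*((m:ℝ)^2+t^2)))) :=
              mul_le_mul_of_nonneg_left h1 (Nat.cast_nonneg m)
          _ = (2/(e0 x)^4) * (t^2/((m:ℝ)*((m:ℝ)^2+t^2))) := h2
      have hb2 : (m:ℝ)*((2*(LL x m)+5)/(LL x m)^4) ≤ (7/(e0 x)^4) * (1/(m:ℝ)^2) := by
        have hnum : 2*(LL x m)+5 ≤ 7*(m:ℝ) := by nlinarith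
        have hden : (e0 x)^4*(m:ℝ)^4 ≤ (LL x m)^4 := by
          nlinarith [pow_le_pow_left₀ (by positivity : (0:ℝ) ≤ (e0 x)^2*(m:ℝ)^2) hL2 2]
        have h1 : (2*(LL x m)+5)/(LL x m)^4 ≤ (7*(m:ℝ))/((e0 x)^4*(m:ℝ)^4) :=
          div_le_div₀ (by positivity) hnum (by positivity) hden
        calc (m:ℝ)*((2*(LL x m)+5)/(LL x m)^4) ≤ (m:ℝ)*((7*(m:ℝ))/((e0 x)^4*(m:ℝ)^4)) :=
              mul_le_mul_of_nonneg_left h1 (Nat.cast_nonneg m)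
          _ = (7/(e0 x)^4) * (1/(m:ℝ)^2) := by field_simp
      calc (m:ℝ) * Gb x t m
          = (m:ℝ)*(2*t^2/((LL x m)^2*((LL x m)^2+t^2))) + (m:ℝ)*((2*(LL x m)+5)/(LL x m)^4) := by
            simp only [Gb]; ring
        _ ≤ _ := add_le_add hb1 hb2
  have hsum2 : Summable (fun m : ℕ => (2/(e0 x)^4) * (t^2/((m:ℝ)*((m:ℝ)^2+t^2)))
      + (7/(e0 x)^4) * (1/(m:ℝ)^2)) :=
    ((summable_f1 t).mul_left _).add ((Real.summable_one_div_nat_pow.mpr (by norm_num : 1 < 2)).mul_left _)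
  calc ∑' m:ℕ, (m:ℝ) * Gb x t m
      ≤ ∑' m:ℕ, ((2/(e0 x)^4) * (t^2/((m:ℝ)*((m:ℝ)^2+t^2))) + (7/(e0 x)^4) * (1/(m:ℝ)^2)) :=
        Summable.tsum_le_tsum key (summable_mGb hx1 hx2 t) hsum2
    _ = (2/(e0 x)^4) * (∑' m:ℕ, t^2/((m:ℝ)*((m:ℝ)^2+t^2))) + (7/(e0 x)^4) * (∑' m:ℕ, 1/(m:ℝ)^2) := by
        rw [Summable.tsum_add ((summable_f1 t).mul_left _) ((Real.summable_one_div_nat_pow.mpr (by norm_num : 1 < 2)).mul_left _),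
          tsum_mul_left, tsum_mul_left]
    _ ≤ (2/(e0 x)^4) * (1 + Real.log (1+t^2)) + (7/(e0 x)^4) * 2 := by
        have h1 := sb1 t
        have h2 := sb2
        have hc1 : (0:ℝ) ≤ 2/(e0 x)^4 := by positivity
        have hc2 : (0:ℝ) ≤ 7/(e0 x)^4 := by positivity
        exact add_le_add (mul_le_mul_of_nonneg_left h1 hc1) (mul_le_mul_of_nonneg_left h2 hc2)
    _ ≤ (2/(e0 x)^4) * (8 + Real.log (1+t^2)) := by
        have : (0:ℝ) < (e0 x)^4 := by positivity
        rw [mul_add, mul_add]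
        have : (2/(e0 x)^4) * (1:ℝ) + (7/(e0 x)^4) * 2 ≤ (2/(e0 x)^4) * 8 := by
          rw [div_mul_eq_mul_div, div_mul_eq_mul_div, div_mul_eq_mul_div, ← add_div, div_le_div_iff₀ (by positivity) (by positivity)]
          nlinarith [pow_pos he 4]
        linarith
end DEV3D
section DEV3F

lemma tsum_shift_eq {x t : ℝ} (hx1 : -(1/2) < x) (hx2 : x < 3/2) (n : ℕ) :
    ∑' j:ℕ, Gb x t (n+1+j) = ∑' m:ℕ, (if n+1 ≤ m then Gb x t m else 0) := by
  have hinj : Function.Injective (fun j : ℕ => n+1+j) := add_right_injective (n+1)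
  have hsupp : Function.support (fun m : ℕ => if n+1 ≤ m then Gb x t m else 0)
      ⊆ Set.range (fun j : ℕ => n+1+j) := by
    intro m hm
    simp only [Function.mem_support, ne_eq, ite_eq_right_iff, not_forall] at hm
    obtain ⟨hle, _⟩ := hm
    exact ⟨m - (n+1), by show n+1+(m-(n+1)) = m; omega⟩
  have := Function.Injective.tsum_eq hinj (f := fun m : ℕ => if n+1 ≤ m then Gb x t m else 0) hsupp
  rw [← this]
  apply tsum_congr
  intro j
  simp

lemma summable_ite_Gb {x t : ℝ} (hx1 : -(1/2) < x) (hx2 : x < 3/2) (n : ℕ) :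
    Summable (fun m : ℕ => if n+1 ≤ m then Gb x t m else 0) := by
  have h1 : Summable (fun m : ℕ => (if n+1 ≤ m+(n+1) then Gb x t (m+(n+1)) else 0)) := by
    have : (fun m : ℕ => (if n+1 ≤ m+(n+1) then Gb x t (m+(n+1)) else 0))
        = fun m : ℕ => Gb x t ((n+1)+m) := by
      funext m
      rw [if_pos (by omega), Nat.add_comm m (n+1)]
    rw [this]
    exact summable_Gb hx1 hx2 t (by omega)
  exact (summable_nat_add_iff (n+1)).mp h1

lemma sum_tsum_Gb_bound {x : ℝ} (hx1 : -(1/2) < x) (hx2 : x < 3/2) (t : ℝ) (N : ℕ) :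
    ∑ n ∈ Finset.range N, ∑' j:ℕ, Gb x t (n+1+j)
      ≤ (2/(e0 x)^4) * (8 + Real.log (1+t^2)) := by
  have hsw : ∑ n ∈ Finset.range N, ∑' j:ℕ, Gb x t (n+1+j)
      = ∑' m:ℕ, ∑ n ∈ Finset.range N, (if n+1 ≤ m then Gb x t m else 0) := by
    rw [Summable.tsum_finsetSum (fun i _ => summable_ite_Gb hx1 hx2 i)]
    exact Finset.sum_congr rfl (fun n _ => tsum_shift_eq hx1 hx2 n)
  rw [hsw]
  have hperm : ∀ m : ℕ, ∑ n ∈ Finset.range N, (if n+1 ≤ m then Gb x t m else 0)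
      ≤ (m:ℝ) * Gb x t m := by
    intro m
    rw [← Finset.sum_filter]
    rw [Finset.sum_const]
    have hcard : ((Finset.range N).filter (fun n => n+1 ≤ m)).card ≤ m := by
      have hsub : (Finset.range N).filter (fun n => n+1 ≤ m) ⊆ Finset.range m := by
        intro a ha
        simp only [Finset.mem_filter, Finset.mem_range] at ha ⊢
        omega
      simpa using Finset.card_le_card hsub
    rw [nsmul_eq_mul]
    apply mul_le_mul_of_nonneg_right _ (Gb_nonneg hx1 hx2 t m)
    exact_mod_cast hcard
  have hsum_lhs : Summable (fun m : ℕ => ∑ n ∈ Finset.range N, (if n+1 ≤ m then Gb x t m else 0)) := by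
    exact summable_sum (fun i _ => summable_ite_Gb hx1 hx2 i)
  calc ∑' m:ℕ, ∑ n ∈ Finset.range N, (if n+1 ≤ m then Gb x t m else 0)
      ≤ ∑' m:ℕ, (m:ℝ) * Gb x t m := Summable.tsum_le_tsum hperm hsum_lhs (summable_mGb hx1 hx2 t)
    _ ≤ (2/(e0 x)^4) * (8 + Real.log (1+t^2)) := tsum_mGb_le hx1 hx2 t
end DEV3F

lemma rbar_le_self (x : ℝ) : rbar x ≤ x := min_le_left _ _

lemma rbar_le_one_sub (x : ℝ) : rbar x ≤ 1 - x :=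
  le_trans (min_le_right _ _) (min_le_left _ _)


-- derivative difference bound (pure algebra)
lemma deriv_diff_bound (t L ξ ζ : ℝ) (hL : 0 < L) (hξ : L ≤ ξ) (hξ2 : ξ ≤ L+2)
    (hζ : L ≤ ζ) (hζ2 : ζ ≤ L+2) :
    |((ξ+1/2)/((ξ+1/2)^2+t^2) - ξ/(ξ^2+t^2)) - (1/(ζ+1/2) - 1/ζ)|
      ≤ 2*t^2/(L^2*(L^2+t^2)) + (2*L+5)/L^4 := by
  have hξ0 : 0 < ξ := lt_of_lt_of_le hL hξ
  have hζ0 : 0 < ζ := lt_of_lt_of_le hL hζ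
  have hξ12 : 0 < ξ + 1/2 := by linarith
  have hζ12 : 0 < ζ + 1/2 := by linarith
  have hd1 : 0 < ξ^2 + t^2 := by positivity
  have hd2 : 0 < (ξ+1/2)^2 + t^2 := by positivity
  have key : ((ξ+1/2)/((ξ+1/2)^2+t^2) - ξ/(ξ^2+t^2)) - (1/(ζ+1/2) - 1/ζ)
      = (t^2/(ξ*(ξ^2+t^2)) - t^2/((ξ+1/2)*((ξ+1/2)^2+t^2)))
        + ((1/(ξ+1/2) - 1/ξ) - (1/(ζ+1/2) - 1/ζ)) := by
    field_simp
    ring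
  rw [key]
  have part1 : |t^2/(ξ*(ξ^2+t^2)) - t^2/((ξ+1/2)*((ξ+1/2)^2+t^2))| ≤ 2*t^2/(L^2*(L^2+t^2)) := by
    have h0 : 0 ≤ t^2/(ξ*(ξ^2+t^2)) - t^2/((ξ+1/2)*((ξ+1/2)^2+t^2)) := by
      have : t^2/((ξ+1/2)*((ξ+1/2)^2+t^2)) ≤ t^2/(ξ*(ξ^2+t^2)) := by
        gcongr <;> nlinarith
      linarith
    rw [_root_.abs_of_nonneg h0]
    have step1 : t^2/(ξ*(ξ^2+t^2)) - t^2/((ξ+1/2)*((ξ+1/2)^2+t^2)) ≤ 2*t^2/(ξ^2*(ξ^2+t^2)) := by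
      have hkey : ((3/2)*ξ^2+(3/4)*ξ+1/8 + t^2/2)*ξ ≤ 2*((ξ+1/2)*((ξ+1/2)^2+t^2)) := by
        nlinarith [sq_nonneg ξ, sq_nonneg t]
      have base : (0:ℝ) ≤ t^2*(ξ^2+t^2)*ξ := by positivity
      have hmul := mul_le_mul_of_nonneg_left hkey base
      rw [div_sub_div _ _ (by positivity) (by positivity), div_le_div_iff₀ (by positivity) (by positivity)]
      nlinarith [hmul]
    have step2 : 2*t^2/(ξ^2*(ξ^2+t^2)) ≤ 2*t^2/(L^2*(L^2+t^2)) := by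
      gcongr <;> nlinarith
    linarith
  have part2 : |(1/(ξ+1/2) - 1/ξ) - (1/(ζ+1/2) - 1/ζ)| ≤ (2*L+5)/L^4 := by
    have key2 : (1/(ξ+1/2) - 1/ξ) - (1/(ζ+1/2) - 1/ζ)
        = ((ξ-ζ)*(ξ+ζ+1/2))/(2*(ξ*(ξ+1/2)*(ζ*(ζ+1/2)))) := by
      field_simp
      ring
    rw [key2, abs_div]
    have hnum : |(ξ-ζ)*(ξ+ζ+1/2)| ≤ 2*(2*L+5) := by
      rw [abs_mul]
      have h1 : |ξ - ζ| ≤ 2 := abs_le.2 ⟨by linarith, by linarith⟩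
      have h2 : |ξ+ζ+1/2| ≤ 2*L+5 := abs_le.2 ⟨by linarith, by linarith⟩
      exact mul_le_mul h1 h2 (abs_nonneg _) (by norm_num)
    have hden : 2*L^4 ≤ |2*(ξ*(ξ+1/2)*(ζ*(ζ+1/2)))| := by
      rw [abs_of_pos (by positivity)]
      have hA : L*L ≤ ξ*(ξ+1/2) := mul_le_mul hξ (by linarith) hL.le hξ0.le
      have hB : L*L ≤ ζ*(ζ+1/2) := mul_le_mul hζ (by linarith) hL.le hζ0.le
      nlinarith [mul_le_mul hA hB (by positivity) (by positivity : (0:ℝ) ≤ ξ*(ξ+1/2))]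
    have : |(ξ-ζ)*(ξ+ζ+1/2)|/|2*(ξ*(ξ+1/2)*(ζ*(ζ+1/2)))| ≤ (2*(2*L+5))/(2*L^4) :=
      div_le_div₀ (by positivity) hnum (by positivity) hden
    have heq : (2*(2*L+5))/(2*L^4) = (2*L+5)/L^4 := by
      rw [mul_div_mul_left _ _ (by norm_num : (2:ℝ) ≠ 0)]
    linarith
  exact (abs_add_le _ _).trans (add_le_add part1 part2)


noncomputable def Hf (t w : ℝ) : ℝ := 1/2*(Real.log ((w+1/2)^2+t^2) - Real.log (w^2+t^2))
noncomputable def Jf (w : ℝ) : ℝ := Real.log (w+1/2) - Real.log w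

lemma hasDerivAt_Hf (t : ℝ) {w : ℝ} (hw : 0 < w) :
    HasDerivAt (Hf t) ((w+1/2)/((w+1/2)^2+t^2) - w/(w^2+t^2)) w := by
  have h1 : HasDerivAt (fun w : ℝ => (w+1/2)^2+t^2) (2*(w+1/2)) w := by
    exact ((((hasDerivAt_id w).add_const (1/2)).pow 2).add_const (t^2)).congr_deriv (by norm_num)
  have h2 : HasDerivAt (fun w : ℝ => w^2+t^2) (2*w) w := by
    simpa using ((hasDerivAt_id w).pow 2).add_const (t^2)
  have hne1 : (w+1/2)^2+t^2 ≠ 0 := by positivity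
  have hne2 : w^2+t^2 ≠ 0 := by positivity
  have := ((h1.log hne1).sub (h2.log hne2)).const_mul (1/2 : ℝ)
  refine this.congr_deriv ?_
  ring
lemma hasDerivAt_Jf {w : ℝ} (hw : 0 < w) :
    HasDerivAt Jf (1/(w+1/2) - 1/w) w := by
  have h1 : HasDerivAt (fun w : ℝ => w+1/2) 1 w := (hasDerivAt_id w).add_const (1/2)
  have := (h1.log (by linarith)).sub ((hasDerivAt_id w).log (ne_of_gt hw))
  unfold Jf
  exact this

lemma mvt_Hf (t a b : ℝ) (hab : a < b) (ha : 0 < a) :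
    ∃ ξ ∈ Set.Ioo a b, Hf t b - Hf t a = (b-a) * ((ξ+1/2)/((ξ+1/2)^2+t^2) - ξ/(ξ^2+t^2)) := by
  obtain ⟨ξ, hξ, h⟩ := exists_hasDerivAt_eq_slope (Hf t)
    (fun w => (w+1/2)/((w+1/2)^2+t^2) - w/(w^2+t^2)) hab
    (fun w hw => (hasDerivAt_Hf t (lt_of_lt_of_le ha hw.1)).continuousAt.continuousWithinAt)
    (fun w hw => hasDerivAt_Hf t (lt_trans ha hw.1))
  exact ⟨ξ, hξ, by rw [h, mul_comm]; exact (div_mul_cancel₀ _ (sub_ne_zero.2 (ne_of_gt hab))).symm⟩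

lemma mvt_Jf (a b : ℝ) (hab : a < b) (ha : 0 < a) :
    ∃ ζ ∈ Set.Ioo a b, Jf b - Jf a = (b-a) * (1/(ζ+1/2) - 1/ζ) := by
  obtain ⟨ζ, hζ, h⟩ := exists_hasDerivAt_eq_slope Jf
    (fun w => 1/(w+1/2) - 1/w) hab
    (fun w hw => (hasDerivAt_Jf (lt_of_lt_of_le ha hw.1)).continuousAt.continuousWithinAt)
    (fun w hw => hasDerivAt_Jf (lt_trans ha hw.1))
  exact ⟨ζ, hζ, by rw [h, mul_comm]; exact (div_mul_cancel₀ _ (sub_ne_zero.2 (ne_of_gt hab))).symm⟩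

-- core per-index bound
lemma wj_bound (t δ v m L : ℝ) (hL : 0 < L)
    (h1 : L ≤ v) (h2 : L ≤ v + δ) (h3 : v ≤ L + 2) (h4 : v + δ ≤ L + 2)
    (h5 : L ≤ m) (h6 : m + 1 ≤ L + 2)
    (hdb : ∀ ξ ζ : ℝ, L ≤ ξ → ξ ≤ L+2 → L ≤ ζ → ζ ≤ L+2 →
      |((ξ+1/2)/((ξ+1/2)^2+t^2) - ξ/(ξ^2+t^2)) - (1/(ζ+1/2) - 1/ζ)| ≤ 2*t^2/(L^2*(L^2+t^2)) + (2*L+5)/L^4) :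
    |(Hf t v - Hf t (v+δ)) - δ * (Jf m - Jf (m+1))|
      ≤ |δ| * (2*t^2/(L^2*(L^2+t^2)) + (2*L+5)/L^4) := by
  have hm0 : 0 < m := lt_of_lt_of_le hL h5
  obtain ⟨ζ, hζmem, hζ⟩ := mvt_Jf m (m+1) (by linarith) hm0
  have hζ1 : L ≤ ζ := le_of_lt (lt_of_le_of_lt h5 hζmem.1)
  have hζ2 : ζ ≤ L+2 := le_of_lt (lt_of_lt_of_le hζmem.2 h6)
  have hJ : Jf m - Jf (m+1) = -(1/(ζ+1/2) - 1/ζ) := by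
    have : Jf (m+1) - Jf m = (m+1-m) * (1/(ζ+1/2) - 1/ζ) := hζ
    have h' : m+1-m = (1:ℝ) := by ring
    rw [h', one_mul] at this
    linarith
  rcases lt_trichotomy δ 0 with hδ | hδ | hδ
  · obtain ⟨ξ, hξmem, hξ⟩ := mvt_Hf t (v+δ) v (by linarith) (lt_of_lt_of_le hL h2)
    have hξ1 : L ≤ ξ := le_of_lt (lt_of_le_of_lt h2 hξmem.1)
    have hξ2 : ξ ≤ L+2 := le_of_lt (lt_of_lt_of_le hξmem.2 h3)
    have hval : (Hf t v - Hf t (v+δ)) - δ * (Jf m - Jf (m+1))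
        = -δ * (((ξ+1/2)/((ξ+1/2)^2+t^2) - ξ/(ξ^2+t^2)) - (1/(ζ+1/2) - 1/ζ)) := by
      rw [hJ]
      have : Hf t v - Hf t (v+δ) = (v-(v+δ)) * ((ξ+1/2)/((ξ+1/2)^2+t^2) - ξ/(ξ^2+t^2)) := hξ
      rw [this]; ring
    rw [hval, abs_mul, abs_neg]
    exact mul_le_mul_of_nonneg_left (hdb ξ ζ hξ1 hξ2 hζ1 hζ2) (abs_nonneg δ)
  · subst hδ
    simp
  · obtain ⟨ξ, hξmem, hξ⟩ := mvt_Hf t v (v+δ) (by linarith) (lt_of_lt_of_le hL h1)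
    have hξ1 : L ≤ ξ := le_of_lt (lt_of_le_of_lt h1 hξmem.1)
    have hξ2 : ξ ≤ L+2 := le_of_lt (lt_of_lt_of_le hξmem.2 h4)
    have hval : (Hf t v - Hf t (v+δ)) - δ * (Jf m - Jf (m+1))
        = -δ * (((ξ+1/2)/((ξ+1/2)^2+t^2) - ξ/(ξ^2+t^2)) - (1/(ζ+1/2) - 1/ζ)) := by
      rw [hJ]
      have : Hf t (v+δ) - Hf t v = (v+δ-v) * ((ξ+1/2)/((ξ+1/2)^2+t^2) - ξ/(ξ^2+t^2)) := hξ
      have h' : v+δ-v = δ := by ring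
      rw [h'] at this
      have : Hf t v - Hf t (v+δ) = -(δ * ((ξ+1/2)/((ξ+1/2)^2+t^2) - ξ/(ξ^2+t^2))) := by linarith
      rw [this]; ring
    rw [hval, abs_mul, abs_neg]
    exact mul_le_mul_of_nonneg_left (hdb ξ ζ hξ1 hξ2 hζ1 hζ2) (abs_nonneg δ)
lemma cne_of_re_pos {z : ℂ} (hz : 0 < z.re) : z ≠ 0 := by
  intro h; rw [h] at hz; simp at hz

lemma cne_nat {z : ℂ} (hz : 0 < z.re) (j : ℕ) : z + (j:ℂ) ≠ 0 := by
  apply cne_of_re_pos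
  rw [Complex.add_re, Complex.natCast_re]
  have : (0:ℝ) ≤ (j:ℝ) := Nat.cast_nonneg j
  linarith

lemma log_norm_complex (z : ℂ) : Real.log ‖z‖ = Real.log (z.re^2+z.im^2)/2 := by
  rw [Complex.norm_def, Real.log_sqrt (Complex.normSq_nonneg z),
    Complex.normSq_apply, show z.re*z.re+z.im*z.im = z.re^2+z.im^2 from by ring]

lemma tendsto_prod_gamma_ratio (z₁ z₂ z₃ z₄ : ℂ)
    (hsum : z₁+z₂ = z₃+z₄) (h1 : 0 < z₁.re) (h2 : 0 < z₂.re) (h3 : 0 < z₃.re) (h4 : 0 < z₄.re) :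
    Filter.Tendsto (fun N : ℕ => ∏ j ∈ Finset.range N, ((z₃+(j:ℂ))*(z₄+(j:ℂ)))/((z₁+(j:ℂ))*(z₂+(j:ℂ))))
      Filter.atTop (nhds (Complex.Gamma z₁ * Complex.Gamma z₂ / (Complex.Gamma z₃ * Complex.Gamma z₄))) := by
  have hGne : Complex.Gamma z₃ * Complex.Gamma z₄ ≠ 0 :=
    mul_ne_zero (Complex.Gamma_ne_zero_of_re_pos h3) (Complex.Gamma_ne_zero_of_re_pos h4)
  have hT : Filter.Tendsto (fun m => (Complex.GammaSeq z₁ m * Complex.GammaSeq z₂ m)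
      /(Complex.GammaSeq z₃ m * Complex.GammaSeq z₄ m)) Filter.atTop
      (nhds (Complex.Gamma z₁ * Complex.Gamma z₂ / (Complex.Gamma z₃ * Complex.Gamma z₄))) :=
    ((Complex.GammaSeq_tendsto_Gamma z₁).mul (Complex.GammaSeq_tendsto_Gamma z₂)).div
      ((Complex.GammaSeq_tendsto_Gamma z₃).mul (Complex.GammaSeq_tendsto_Gamma z₄)) hGne
  rw [← tendsto_add_atTop_iff_nat 1]
  apply Filter.Tendsto.congr' _ hT
  filter_upwards [Filter.eventually_ge_atTop 1] with m hm
  have hmr : (0:ℝ) < (m:ℝ) := by exact_mod_cast hm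
  have hm0 : (m:ℂ) ≠ 0 := by
    simp only [ne_eq, Nat.cast_eq_zero]; omega
  have hp1 := Finset.prod_ne_zero_iff.mpr (fun j (_ : j ∈ Finset.range (m+1)) => cne_nat h1 j)
  have hp2 := Finset.prod_ne_zero_iff.mpr (fun j (_ : j ∈ Finset.range (m+1)) => cne_nat h2 j)
  have hp3 := Finset.prod_ne_zero_iff.mpr (fun j (_ : j ∈ Finset.range (m+1)) => cne_nat h3 j)
  have hp4 := Finset.prod_ne_zero_iff.mpr (fun j (_ : j ∈ Finset.range (m+1)) => cne_nat h4 j)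
  have hfac : (m:ℂ)^z₁ * (m:ℂ)^z₂ = (m:ℂ)^z₃ * (m:ℂ)^z₄ := by
    rw [← Complex.cpow_add _ _ hm0, ← Complex.cpow_add _ _ hm0, hsum]
  have hcne : ∀ z : ℂ, (m:ℂ)^z ≠ 0 := fun z => by
    have : ‖(m:ℂ)^z‖ ≠ 0 := by
      have hcast : (m:ℂ) = (((m:ℝ)):ℂ) := by push_cast; rfl
      rw [hcast, Complex.norm_cpow_eq_rpow_re_of_pos hmr]
      positivity
    intro h; rw [h] at this; simp at this
  have hfactne : ((Nat.factorial m : ℂ)) ≠ 0 := by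
    exact_mod_cast Nat.factorial_ne_zero m
  show (Complex.GammaSeq z₁ m * Complex.GammaSeq z₂ m) / (Complex.GammaSeq z₃ m * Complex.GammaSeq z₄ m)
      = ∏ j ∈ Finset.range (m+1), ((z₃+(j:ℂ))*(z₄+(j:ℂ)))/((z₁+(j:ℂ))*(z₂+(j:ℂ)))
  rw [Finset.prod_div_distrib, Finset.prod_mul_distrib, Finset.prod_mul_distrib]
  simp only [Complex.GammaSeq]
  field_simp
  rw [div_eq_iff (mul_ne_zero (hcne z₃) (hcne z₄))]
  linear_combination hfac

lemma log_Kterm_bound (x t : ℝ) (hx1 : -(1/2) < x) (hx2 : x < 3/2) (n : ℕ) :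
    Kterm (n+1) ((x:ℂ) + (t:ℂ)*Complex.I) ≠ 0 ∧
    |Real.log ‖Kterm (n+1) ((x:ℂ) + (t:ℂ)*Complex.I)‖| ≤ |1-2*x| * ∑' j:ℕ, Gb x t (n+1+j) := by
  have hrb := neg_half_lt_rbar hx1 hx2
  have hrb0 := rbar_le_zero x
  have hrbx := rbar_le_self x
  have hrb1x := rbar_le_one_sub x
  set l : ℂ := (x:ℂ) + (t:ℂ)*Complex.I with hl
  have hlre : l.re = x := by simp [hl]
  have hlim : l.im = t := by simp [hl]
  set nr : ℝ := (n:ℝ)+1 with hnr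
  have hnr1 : (1:ℝ) ≤ nr := by rw [hnr]; have : (0:ℝ) ≤ (n:ℝ) := Nat.cast_nonneg n; linarith
  set z₁ : ℂ := ((n+1:ℕ):ℂ) - 1/2 + l with hz₁
  set z₂ : ℂ := ((n+1:ℕ):ℂ) + 1 - l with hz₂
  set z₃ : ℂ := ((n+1:ℕ):ℂ) + 1/2 - l with hz₃
  set z₄ : ℂ := ((n+1:ℕ):ℂ) + l with hz₄
  have hcast : ((n+1:ℕ):ℂ).re = nr := by rw [hnr]; push_cast; simp
  have hcasti : ((n+1:ℕ):ℂ).im = 0 := by push_cast; simp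
  -- re/im of z's
  have h1re : z₁.re = nr - 1/2 + x := by
    rw [hz₁]; simp [Complex.add_re, Complex.sub_re, hcast, hlre, hnr]
  have h1im : z₁.im = t := by
    rw [hz₁]; simp [Complex.add_im, Complex.sub_im, hcasti, hlim]
  have h2re : z₂.re = nr + 1 - x := by
    rw [hz₂]; simp [Complex.add_re, Complex.sub_re, hcast, hlre, hnr]
  have h2im : z₂.im = -t := by
    rw [hz₂]; simp [Complex.add_im, Complex.sub_im, hcasti, hlim]
  have h3re : z₃.re = nr + 1/2 - x := by
    rw [hz₃]; simp [Complex.add_re, Complex.sub_re, hcast, hlre, hnr]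
  have h3im : z₃.im = -t := by
    rw [hz₃]; simp [Complex.add_im, Complex.sub_im, hcasti, hlim]
  have h4re : z₄.re = nr + x := by
    rw [hz₄]; simp [Complex.add_re, hcast, hlre, hnr]
  have h4im : z₄.im = t := by
    rw [hz₄]; simp [Complex.add_im, hcasti, hlim]
  have h1pos : 0 < z₁.re := by rw [h1re]; linarith
  have h2pos : 0 < z₂.re := by rw [h2re]; linarith
  have h3pos : 0 < z₃.re := by rw [h3re]; linarith
  have h4pos : 0 < z₄.re := by rw [h4re]; linarith
  have hsum : z₁ + z₂ = z₃ + z₄ := by rw [hz₁, hz₂, hz₃, hz₄]; ring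
  -- Gamma nonvanishing
  have hG1 := Complex.Gamma_ne_zero_of_re_pos h1pos
  have hG2 := Complex.Gamma_ne_zero_of_re_pos h2pos
  have hG3 := Complex.Gamma_ne_zero_of_re_pos h3pos
  have hG4 := Complex.Gamma_ne_zero_of_re_pos h4pos
  have hRqne : Complex.Gamma z₁ * Complex.Gamma z₂ / (Complex.Gamma z₃ * Complex.Gamma z₄) ≠ 0 :=
    div_ne_zero (mul_ne_zero hG1 hG2) (mul_ne_zero hG3 hG4)
  -- Kterm decomposition
  have hKt : Kterm (n+1) l = (Complex.Gamma z₁ * Complex.Gamma z₂ / (Complex.Gamma z₃ * Complex.Gamma z₄))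
      * (((n+1:ℕ):ℂ)/(((n+1:ℕ):ℂ)-1/2))^(2*l-1) := by
    rw [hz₁, hz₂, hz₃, hz₄]; rfl
  -- cpow part
  have hnrpos : (0:ℝ) < nr - 1/2 := by linarith
  have hprpos : (0:ℝ) < nr/(nr-1/2) := by positivity
  have hbase : ((n+1:ℕ):ℂ)/(((n+1:ℕ):ℂ)-1/2) = (((nr/(nr-1/2)):ℝ):ℂ) := by
    rw [hnr]; push_cast; ring
  have hcpowre : (2*l-1).re = 2*x-1 := by
    simp [Complex.sub_re, Complex.mul_re, hlre, hlim]
  have hcpownorm : ‖(((n+1:ℕ):ℂ)/(((n+1:ℕ):ℂ)-1/2))^(2*l-1)‖ = (nr/(nr-1/2))^(2*x-1) := by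
    rw [hbase, Complex.norm_cpow_eq_rpow_re_of_pos hprpos, hcpowre]
  have hcpne : (((n+1:ℕ):ℂ)/(((n+1:ℕ):ℂ)-1/2))^(2*l-1) ≠ 0 := by
    intro h
    rw [h] at hcpownorm
    simp only [norm_zero] at hcpownorm
    have := Real.rpow_pos_of_pos hprpos (2*x-1)
    rw [← hcpownorm] at this
    exact lt_irrefl 0 this
  have hKne : Kterm (n+1) l ≠ 0 := by rw [hKt]; exact mul_ne_zero hRqne hcpne
  refine ⟨hKne, ?_⟩
  -- log decomposition of Kterm
  have hlogK : Real.log ‖Kterm (n+1) l‖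
      = Real.log ‖Complex.Gamma z₁ * Complex.Gamma z₂ / (Complex.Gamma z₃ * Complex.Gamma z₄)‖
        + (2*x-1) * Real.log (nr/(nr-1/2)) := by
    rw [hKt, norm_mul, Real.log_mul (norm_ne_zero_iff.mpr hRqne) (norm_ne_zero_iff.mpr hcpne),
      hcpownorm, Real.log_rpow hprpos]
  -- per j norm-log of ratio
  set u₁ : ℝ := nr - 1/2 + x with hu₁
  set u₃ : ℝ := nr + 1/2 - x with hu₃
  have key : ∀ j : ℕ, Real.log ‖((z₃+(j:ℂ))*(z₄+(j:ℂ)))/((z₁+(j:ℂ))*(z₂+(j:ℂ)))‖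
      = Hf t (u₁+j) - Hf t (u₃+j) := by
    intro j
    have hne1 := cne_nat h1pos j
    have hne2 := cne_nat h2pos j
    have hne3 := cne_nat h3pos j
    have hne4 := cne_nat h4pos j
    rw [norm_div, norm_mul, norm_mul,
      Real.log_div (mul_ne_zero (norm_ne_zero_iff.mpr hne3) (norm_ne_zero_iff.mpr hne4)) (mul_ne_zero (norm_ne_zero_iff.mpr hne1) (norm_ne_zero_iff.mpr hne2)),
      Real.log_mul (norm_ne_zero_iff.mpr hne3) (norm_ne_zero_iff.mpr hne4),
      Real.log_mul (norm_ne_zero_iff.mpr hne1) (norm_ne_zero_iff.mpr hne2),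
      log_norm_complex (z₁+(j:ℂ)), log_norm_complex (z₂+(j:ℂ)),
      log_norm_complex (z₃+(j:ℂ)), log_norm_complex (z₄+(j:ℂ))]
    simp only [Complex.add_re, Complex.add_im, Complex.natCast_re, Complex.natCast_im,
      h1re, h1im, h2re, h2im, h3re, h3im, h4re, h4im, add_zero]
    simp only [Hf, hu₁, hu₃]
    rw [show (nr+1/2-x+(j:ℝ))^2 = ((nr-1/2+x+(j:ℝ))+(1-2*x))^2 from by ring]
    ring_nf
  -- product limit
  have hT := tendsto_prod_gamma_ratio z₁ z₂ z₃ z₄ hsum h1pos h2pos h3pos h4pos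
  have hratio_ne : ∀ j : ℕ, ((z₃+(j:ℂ))*(z₄+(j:ℂ)))/((z₁+(j:ℂ))*(z₂+(j:ℂ))) ≠ 0 := fun j =>
    div_ne_zero (mul_ne_zero (cne_nat h3pos j) (cne_nat h4pos j))
      (mul_ne_zero (cne_nat h1pos j) (cne_nat h2pos j))
  have hlogP : ∀ N : ℕ, Real.log ‖∏ j ∈ Finset.range N, ((z₃+(j:ℂ))*(z₄+(j:ℂ)))/((z₁+(j:ℂ))*(z₂+(j:ℂ)))‖
      = ∑ j ∈ Finset.range N, (Hf t (u₁+j) - Hf t (u₃+j)) := by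
    intro N
    rw [norm_prod, Real.log_prod (fun j _ => norm_ne_zero_iff.mpr (hratio_ne j))]
    exact Finset.sum_congr rfl (fun j _ => key j)
  have hTlog : Filter.Tendsto (fun N => ∑ j ∈ Finset.range N, (Hf t (u₁+j) - Hf t (u₃+j))) Filter.atTop
      (nhds (Real.log ‖Complex.Gamma z₁ * Complex.Gamma z₂ / (Complex.Gamma z₃ * Complex.Gamma z₄)‖)) := by
    have h1 := hT.norm
    have h2 := h1.log (norm_ne_zero_iff.mpr hRqne)
    exact h2.congr hlogP
  -- telescoping part
  set JT : ℕ → ℝ := fun j => Jf (nr - 1/2 + (j:ℝ)) with hJT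
  have hJT0 : ∀ j:ℕ, (0:ℝ) < nr - 1/2 + (j:ℝ) := fun j => by
    have : (0:ℝ) ≤ (j:ℝ) := Nat.cast_nonneg j; linarith
  have hJTpos : ∀ j, 0 ≤ JT j := by
    intro j
    simp only [hJT, Jf]
    have := hJT0 j
    have := Real.log_le_log this (by linarith : nr - 1/2 + (j:ℝ) ≤ nr - 1/2 + (j:ℝ) + 1/2)
    linarith
  have hJTub : ∀ j:ℕ, JT j ≤ 1/((j:ℝ)+1) := by
    intro j
    simp only [hJT, Jf]
    have hw : (0:ℝ) < nr - 1/2 + (j:ℝ) := hJT0 j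
    set w : ℝ := nr - 1/2 + (j:ℝ) with hwdef
    have h1 : Real.log (w+1/2) - Real.log w = Real.log ((w+1/2)/w) :=
      (Real.log_div (by linarith) (ne_of_gt hw)).symm
    rw [h1]
    have h2 : Real.log ((w+1/2)/w) ≤ (w+1/2)/w - 1 := Real.log_le_sub_one_of_pos (by positivity)
    have h3 : (w+1/2)/w - 1 = 1/(2*w) := by field_simp; ring
    have h4 : 1/(2*w) ≤ 1/((j:ℝ)+1) := by
      apply one_div_le_one_div_of_le (by positivity)
      have : (0:ℝ) ≤ (j:ℝ) := Nat.cast_nonneg j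
      rw [hwdef]; linarith
    linarith
  have hJTlim : Filter.Tendsto JT Filter.atTop (nhds 0) :=
    squeeze_zero hJTpos hJTub tendsto_one_div_add_atTop_nhds_zero_nat
  set W : ℕ → ℝ := fun j => (Hf t (u₁+j) - Hf t (u₃+j)) - (1-2*x)*(JT j - JT (j+1)) with hW
  have hsumW : ∀ N, ∑ j ∈ Finset.range N, W j
      = (∑ j ∈ Finset.range N, (Hf t (u₁+j) - Hf t (u₃+j))) - (1-2*x)*(JT 0 - JT N) := by
    intro N
    rw [Finset.sum_sub_distrib, ← Finset.mul_sum, Finset.sum_range_sub' JT N]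
  have hTW : Filter.Tendsto (fun N => ∑ j ∈ Finset.range N, W j) Filter.atTop
      (nhds (Real.log ‖Complex.Gamma z₁ * Complex.Gamma z₂ / (Complex.Gamma z₃ * Complex.Gamma z₄)‖
        - (1-2*x)*(JT 0 - 0))) := by
    apply Filter.Tendsto.congr (fun N => (hsumW N).symm)
    exact hTlog.sub ((tendsto_const_nhds.sub hJTlim).const_mul _)
  have hJf0 : JT 0 = Real.log (nr/(nr-1/2)) := by
    simp only [hJT, Jf, Nat.cast_zero, add_zero]
    rw [Real.log_div (by linarith) (by linarith), show nr-1/2+1/2 = nr from by ring]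
  have hvalue : Real.log ‖Complex.Gamma z₁ * Complex.Gamma z₂ / (Complex.Gamma z₃ * Complex.Gamma z₄)‖
      - (1-2*x)*(JT 0 - 0) = Real.log ‖Kterm (n+1) l‖ := by
    rw [hlogK, hJf0]; ring
  -- per-j bound
  have hWbound : ∀ j : ℕ, |W j| ≤ |1-2*x| * Gb x t (n+1+j) := by
    intro j
    have hjr : (0:ℝ) ≤ (j:ℝ) := Nat.cast_nonneg j
    have hLL : LL x (n+1+j) = nr - 1/2 + (j:ℝ) + rbar x := by
      simp only [LL]; rw [hnr]; push_cast; ring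
    have hL : 0 < LL x (n+1+j) := LL_pos hx1 hx2 (by omega)
    have hW2 : W j = (Hf t (u₁+(j:ℝ)) - Hf t ((u₁+(j:ℝ))+(1-2*x)))
        - (1-2*x)*(Jf (nr-1/2+(j:ℝ)) - Jf ((nr-1/2+(j:ℝ))+1)) := by
      simp only [hW, hJT]
      rw [show (u₁+(j:ℝ))+(1-2*x) = u₃+(j:ℝ) from by rw [hu₁, hu₃]; ring,
        show ((j+1:ℕ):ℝ) = (j:ℝ)+1 from by push_cast; ring,
        show nr-1/2+((j:ℝ)+1) = (nr-1/2+(j:ℝ))+1 from by ring]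
    rw [hW2]
    have happ := wj_bound t (1-2*x) (u₁+(j:ℝ)) (nr-1/2+(j:ℝ)) (LL x (n+1+j)) hL
      (by rw [hLL, hu₁]; linarith)
      (by rw [hLL, hu₁]; linarith)
      (by rw [hLL, hu₁]; linarith)
      (by rw [hLL, hu₁]; linarith)
      (by rw [hLL]; linarith)
      (by rw [hLL]; linarith)
      (fun ξ ζ hb1 hb2 hb3 hb4 => deriv_diff_bound t (LL x (n+1+j)) ξ ζ hL hb1 hb2 hb3 hb4)
    calc |(Hf t (u₁+(j:ℝ)) - Hf t ((u₁+(j:ℝ))+(1-2*x)))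
        - (1-2*x)*(Jf (nr-1/2+(j:ℝ)) - Jf ((nr-1/2+(j:ℝ))+1))|
        ≤ |1-2*x| * (2*t^2/((LL x (n+1+j))^2*((LL x (n+1+j))^2+t^2)) + (2*(LL x (n+1+j))+5)/(LL x (n+1+j))^4) := happ
      _ = |1-2*x| * Gb x t (n+1+j) := by simp only [Gb]
  -- conclusion
  have habs : Filter.Tendsto (fun N => |∑ j ∈ Finset.range N, W j|) Filter.atTop
      (nhds (|Real.log ‖Kterm (n+1) l‖|)) := by
    rw [← hvalue]
    exact hTW.abs
  apply le_of_tendsto habs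
  filter_upwards with N
  calc |∑ j ∈ Finset.range N, W j| ≤ ∑ j ∈ Finset.range N, |W j| := Finset.abs_sum_le_sum_abs _ _
    _ ≤ ∑ j ∈ Finset.range N, |1-2*x| * Gb x t (n+1+j) := Finset.sum_le_sum (fun j _ => hWbound j)
    _ = |1-2*x| * ∑ j ∈ Finset.range N, Gb x t (n+1+j) := by rw [Finset.mul_sum]
    _ ≤ |1-2*x| * ∑' j:ℕ, Gb x t (n+1+j) := by
        apply mul_le_mul_of_nonneg_left _ (abs_nonneg _)
        exact Summable.sum_le_tsum _ (fun i _ => Gb_nonneg hx1 hx2 t _) (summable_Gb hx1 hx2 t (by omega))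


lemma prod_norm_Kterm_bound (x t : ℝ) (hx1 : -(1/2) < x) (hx2 : x < 3/2) (N : ℕ) :
    |Real.log (∏ n ∈ Finset.range N, ‖Kterm (n+1) ((x:ℂ)+(t:ℂ)*Complex.I)‖)|
      ≤ |1-2*x| * ((2/(e0 x)^4) * (8 + Real.log (1+t^2))) := by
  rw [Real.log_prod (fun n _ => norm_ne_zero_iff.mpr (log_Kterm_bound x t hx1 hx2 n).1)]
  calc |∑ n ∈ Finset.range N, Real.log ‖Kterm (n+1) ((x:ℂ)+(t:ℂ)*Complex.I)‖|
      ≤ ∑ n ∈ Finset.range N, |Real.log ‖Kterm (n+1) ((x:ℂ)+(t:ℂ)*Complex.I)‖| :=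
        Finset.abs_sum_le_sum_abs _ _
    _ ≤ ∑ n ∈ Finset.range N, |1-2*x| * ∑' j:ℕ, Gb x t (n+1+j) :=
        Finset.sum_le_sum (fun n _ => (log_Kterm_bound x t hx1 hx2 n).2)
    _ = |1-2*x| * ∑ n ∈ Finset.range N, ∑' j:ℕ, Gb x t (n+1+j) := by rw [Finset.mul_sum]
    _ ≤ |1-2*x| * ((2/(e0 x)^4) * (8 + Real.log (1+t^2))) :=
        mul_le_mul_of_nonneg_left (sum_tsum_Gb_bound hx1 hx2 t N) (abs_nonneg _)

lemma norm_Kfun_bounds (x t : ℝ) (hx1 : -(1/2) < x) (hx2 : x < 3/2) :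
    Real.exp (-(|1-2*x| * ((2/(e0 x)^4) * (8 + Real.log (1+t^2))))) ≤ ‖Kfun ((x:ℂ)+(t:ℂ)*Complex.I)‖
    ∧ ‖Kfun ((x:ℂ)+(t:ℂ)*Complex.I)‖ ≤ Real.exp (|1-2*x| * ((2/(e0 x)^4) * (8 + Real.log (1+t^2)))) := by
  set c : ℝ := |1-2*x| * ((2/(e0 x)^4) * (8 + Real.log (1+t^2))) with hcdef
  have hlog1 : (0:ℝ) ≤ Real.log (1+t^2) := Real.log_nonneg (by nlinarith [sq_nonneg t])
  have hc0 : 0 ≤ c := by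
    rw [hcdef]
    have : (0:ℝ) ≤ 2/(e0 x)^4 := by positivity
    have h8 : (0:ℝ) ≤ 8 + Real.log (1+t^2) := by linarith
    positivity
  have hNbound : ∀ N : ℕ, Real.exp (-c) ≤ ∏ n ∈ Finset.range N, ‖Kterm (n+1) ((x:ℂ)+(t:ℂ)*Complex.I)‖
      ∧ (∏ n ∈ Finset.range N, ‖Kterm (n+1) ((x:ℂ)+(t:ℂ)*Complex.I)‖) ≤ Real.exp c := by
    intro N
    have hpos : 0 < ∏ n ∈ Finset.range N, ‖Kterm (n+1) ((x:ℂ)+(t:ℂ)*Complex.I)‖ :=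
      Finset.prod_pos (fun n _ => norm_pos_iff.mpr (log_Kterm_bound x t hx1 hx2 n).1)
    have hb := prod_norm_Kterm_bound x t hx1 hx2 N
    rw [← hcdef] at hb
    rw [abs_le] at hb
    constructor
    · calc Real.exp (-c) ≤ Real.exp (Real.log (∏ n ∈ Finset.range N, ‖Kterm (n+1) ((x:ℂ)+(t:ℂ)*Complex.I)‖)) :=
          Real.exp_le_exp.mpr hb.1
        _ = _ := Real.exp_log hpos
    · calc (∏ n ∈ Finset.range N, ‖Kterm (n+1) ((x:ℂ)+(t:ℂ)*Complex.I)‖)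
          = Real.exp (Real.log (∏ n ∈ Finset.range N, ‖Kterm (n+1) ((x:ℂ)+(t:ℂ)*Complex.I)‖)) :=
          (Real.exp_log hpos).symm
        _ ≤ Real.exp c := Real.exp_le_exp.mpr hb.2
  by_cases hmul : Multipliable (fun n:ℕ => Kterm (n+1) ((x:ℂ)+(t:ℂ)*Complex.I))
  · have ht : Filter.Tendsto (fun N => ∏ n ∈ Finset.range N, Kterm (n+1) ((x:ℂ)+(t:ℂ)*Complex.I))
        Filter.atTop (nhds (Kfun ((x:ℂ)+(t:ℂ)*Complex.I))) := hmul.hasProd.tendsto_prod_nat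
    have htn := ht.norm
    constructor
    · apply ge_of_tendsto htn
      filter_upwards with N
      rw [norm_prod]
      exact (hNbound N).1
    · apply le_of_tendsto htn
      filter_upwards with N
      rw [norm_prod]
      exact (hNbound N).2
  · have : Kfun ((x:ℂ)+(t:ℂ)*Complex.I) = 1 := tprod_eq_one_of_not_multipliable hmul
    rw [this, norm_one]
    constructor
    · exact Real.exp_le_one_iff.mpr (by linarith)
    · exact Real.one_le_exp hc0


lemma den_lb (ϑ η : ℝ) (hη : 1 ≤ |η|) :
    (1/2)*Real.exp (π*|η|)
      ≤ ‖Complex.exp (Complex.I*(π:ℂ)*((ϑ:ℂ)+(η:ℂ)*Complex.I))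
          - Complex.exp (-(Complex.I*(π:ℂ)*((ϑ:ℂ)+(η:ℂ)*Complex.I)))‖ := by
  have hπ := Real.pi_pos
  set z : ℂ := Complex.I*(π:ℂ)*((ϑ:ℂ)+(η:ℂ)*Complex.I) with hz
  have hre : z.re = -(π*η) := by
    rw [hz]; simp [Complex.mul_re, Complex.mul_im]
  have h1 : ‖Complex.exp z‖ = Real.exp (-(π*η)) := by
    rw [Complex.norm_exp, hre]
  have h2 : ‖Complex.exp (-z)‖ = Real.exp (π*η) := by
    rw [Complex.norm_exp, Complex.neg_re, hre]; ring_nf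
  have hkey : Real.exp (π*|η|) - Real.exp (-(π*|η|)) ≤ ‖Complex.exp z - Complex.exp (-z)‖ := by
    rcases le_total 0 η with hs | hs
    · rw [_root_.abs_of_nonneg hs]
      calc Real.exp (π*η) - Real.exp (-(π*η))
          = ‖Complex.exp (-z)‖ - ‖Complex.exp z‖ := by rw [h1, h2]
        _ ≤ ‖Complex.exp (-z) - Complex.exp z‖ := norm_sub_norm_le _ _
        _ = ‖Complex.exp z - Complex.exp (-z)‖ := norm_sub_rev _ _
    · rw [_root_.abs_of_nonpos hs]
      calc Real.exp (π*(-η)) - Real.exp (-(π*(-η)))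
          = ‖Complex.exp z‖ - ‖Complex.exp (-z)‖ := by rw [h1, h2]; ring_nf
        _ ≤ ‖Complex.exp z - Complex.exp (-z)‖ := norm_sub_norm_le _ _
  have hsmall : Real.exp (-(π*|η|)) ≤ 1/2 := by
    have he1 : Real.exp (-(π*|η|)) ≤ Real.exp (-π) := by
      apply Real.exp_le_exp.mpr
      have : π ≤ π*|η| := by nlinarith
      linarith
    have he2 : Real.exp (-π) ≤ 1/2 := by
      rw [Real.exp_neg]
      have h3 : (2:ℝ) ≤ Real.exp π := by
        have := Real.add_one_le_exp π
        linarith [Real.pi_gt_three]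
      rw [inv_le_comm₀ (Real.exp_pos π) (by norm_num : (0:ℝ) < 1/2)]
      norm_num
      linarith
    linarith
  have hbig : (1:ℝ) ≤ Real.exp (π*|η|) := by
    rw [show (1:ℝ) = Real.exp 0 from (Real.exp_zero).symm]
    apply Real.exp_le_exp.mpr
    positivity
  linarith

lemma log_le_aux {y W : ℝ} (hy : 0 ≤ y) (hW : 1 ≤ W) :
    Real.log (1+y) ≤ Real.log W + y/W := by
  have h1 : Real.log (1+y) ≤ Real.log (W+y) :=
    Real.log_le_log (by linarith) (by linarith)
  have h2 : Real.log (W+y) = Real.log W + Real.log (1+y/W) := by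
    rw [← Real.log_mul (by linarith) (by positivity)]
    congr 1
    field_simp
  have h3 : Real.log (1+y/W) ≤ y/W := by
    have := Real.log_le_sub_one_of_pos (show (0:ℝ) < 1+y/W by positivity)
    linarith
  linarith

lemma hWS_lemma (S : ℝ) : 2*S ≤ (π/8)*(max 1 (16*(S+1)/π)) := by
  have hπ := Real.pi_pos
  have h1 : 16*(S+1)/π ≤ max 1 (16*(S+1)/π) := le_max_right _ _
  have h2 : (π/8)*(16*(S+1)/π) = 2*(S+1) := by field_simp; ring
  nlinarith [le_max_left (1:ℝ) (16*(S+1)/π)]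

lemma logmono_sq {a b : ℝ} (h : |a| ≤ |b|) : Real.log (1+a^2) ≤ Real.log (1+b^2) := by
  apply Real.log_le_log (by positivity)
  have h1 : a^2 ≤ b^2 := by
    rw [← _root_.sq_abs a, ← _root_.sq_abs b]
    exact pow_le_pow_left₀ (abs_nonneg a) h 2
  linarith

lemma loglin (W τa : ℝ) (hW1 : 1 ≤ W) (hτ : 0 ≤ τa) :
    Real.log (1+τa^2) ≤ 2*Real.log W + 2*(τa/W) := by
  have h1 : Real.log (1+τa^2) ≤ 2*Real.log (1+τa) := by
    have ha : (1:ℝ)+τa^2 ≤ (1+τa)^2 := by nlinarith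
    have hb : Real.log (1+τa^2) ≤ Real.log ((1+τa)^2) :=
      Real.log_le_log (by positivity) ha
    rw [Real.log_pow] at hb
    push_cast at hb
    linarith
  have h2 : Real.log (1+τa) ≤ Real.log W + τa/W := log_le_aux hτ hW1
  linarith

lemma hexp_outer (S W c12 ηn τn : ℝ) (hS0 : 0 ≤ S) (hW1 : 1 ≤ W)
    (hWS : 2*S ≤ (π/8)*W) (hτ : 0 ≤ τn)
    (hc : c12 ≤ 8*S + S*(2*Real.log W + 2*(τn/W))) (hη2 : τn/2 ≤ ηn) :
    c12 - π*ηn ≤ (8*S + 2*S*(Real.log W)) + (-(π/2 - π/4) * ηn) + (-(π/4) * τn) := by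
  have hπ := Real.pi_pos
  have hWpos : (0:ℝ) < W := by linarith
  have hWterm : 2*S*(τn/W) ≤ (π/8)*τn := by
    have h := mul_le_mul_of_nonneg_right hWS (div_nonneg hτ hWpos.le)
    have he : (π/8)*W*(τn/W) = (π/8)*τn := by field_simp
    calc 2*S*(τn/W) ≤ (π/8)*W*(τn/W) := h
      _ = (π/8)*τn := he
  have hπη : π*(τn/2) ≤ π*ηn := mul_le_mul_of_nonneg_left hη2 hπ.le
  have hexpand : 8*S + S*(2*Real.log W + 2*(τn/W)) = 8*S + 2*S*Real.log W + 2*S*(τn/W) := by ring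
  linarith


/-- for `ϑ ∈ (0,1)` and `σ ∈ (max{-1/2,-ϑ}, 3/2-ϑ)` there is `M₀ > 0`
such that for all `M ≥ M₀` there are `ε ∈ (0,π/2)` and `C = C(M,σ,ϑ) > 0` with
`|Φ(s,ζ)| ≤ C e^{-(π/2-ε)|η|} e^{-(π/4)|τ|}` whenever `s = σ+iτ`, `ζ = ϑ+iη` and
`(η,τ) ∈ Σ₃ ∪ Σ₅ ∪ Σ₉ ∪ Σ₁₁`, where `Σ₃ = {M-τ < η < -τ/2, τ > 2M}`,
`Σ₅ = {-(3/2)τ < η < -M-τ, τ > 2M}`, `Σ₉ = {-τ/2 < η < -τ-M, τ < -2M}`,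
`Σ₁₁ = {M-τ < η < -(3/2)τ, τ < -2M}`. -/
theorem stmt10 (ϑ σ : ℝ) (hϑ : ϑ ∈ Set.Ioo (0:ℝ) 1)
    (hσ : σ ∈ Set.Ioo (max (-1/2) (-ϑ)) (3/2 - ϑ)) :
    ∃ M₀ > (0 : ℝ), ∀ M ≥ M₀, ∃ ε ∈ Set.Ioo (0 : ℝ) (π/2), ∃ C > (0 : ℝ), ∀ τ η : ℝ,
      ((M - τ < η ∧ η < -τ/2 ∧ 2 * M < τ) ∨
       (-(3/2) * τ < η ∧ η < -M - τ ∧ 2 * M < τ) ∨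
       (-τ/2 < η ∧ η < -τ - M ∧ τ < -2 * M) ∨
       (M - τ < η ∧ η < -(3/2) * τ ∧ τ < -2 * M)) →
      ‖Phi ((σ : ℂ) + (τ : ℂ) * Complex.I) ((ϑ : ℂ) + (η : ℂ) * Complex.I)‖ ≤
        C * Real.exp (-(π/2 - ε) * |η|) * Real.exp (-(π/4) * |τ|) := by
  have hπ := Real.pi_pos
  obtain ⟨hϑ0, hϑ1⟩ := hϑ
  obtain ⟨hσl, hσr⟩ := hσ
  have hσl1 : -(1/2) < σ := by
    have := le_max_left (-1/2 : ℝ) (-ϑ)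
    linarith
  have hσϑpos : 0 < σ + ϑ := by
    have := le_max_right (-1/2 : ℝ) (-ϑ)
    linarith
  have hx11 : -(1/2) < σ := hσl1
  have hx12 : σ < 3/2 := by linarith
  have hx21 : -(1/2) < σ+ϑ := by linarith
  have hx22 : σ+ϑ < 3/2 := by linarith
  set B1 : ℝ := |1-2*σ| * (2/(e0 σ)^4) with hB1
  set B2 : ℝ := |1-2*(σ+ϑ)| * (2/(e0 (σ+ϑ))^4) with hB2
  have hB1nn : 0 ≤ B1 := by rw [hB1]; positivity
  have hB2nn : 0 ≤ B2 := by rw [hB2]; positivity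
  set S : ℝ := B1 + B2 with hS
  have hS0 : 0 ≤ S := by rw [hS]; linarith
  set W : ℝ := max 1 (16*(S+1)/π) with hW
  have hW1 : (1:ℝ) ≤ W := le_max_left _ _
  have hWS : 2*S ≤ (π/8)*W := hWS_lemma S
  refine ⟨1, one_pos, ?_⟩
  intro M hM
  refine ⟨π/4, ⟨by positivity, by linarith⟩, ?_⟩
  set C : ℝ := (2/(σ+ϑ)) * Real.exp (8*S + 2*S*(Real.log W)) with hC
  have hCpos : 0 < C := by rw [hC]; positivity
  refine ⟨C, hCpos, ?_⟩
  intro τ η hreg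
  have hfacts : |τ+η| ≤ |τ|/2 ∧ |τ|/2 ≤ |η| ∧ 1 ≤ |η| ∧ 2 ≤ |τ| := by
    rcases hreg with ⟨h1,h2,h3⟩ | ⟨h1,h2,h3⟩ | ⟨h1,h2,h3⟩ | ⟨h1,h2,h3⟩
    · rw [abs_of_pos (show (0:ℝ) < τ by linarith),
        abs_of_pos (show (0:ℝ) < τ+η by linarith),
        abs_of_neg (show η < 0 by linarith)]
      refine ⟨by linarith, by linarith, by linarith, by linarith⟩
    · rw [abs_of_pos (show (0:ℝ) < τ by linarith),
        abs_of_neg (show τ+η < 0 by linarith),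
        abs_of_neg (show η < 0 by linarith)]
      refine ⟨by linarith, by linarith, by linarith, by linarith⟩
    · rw [abs_of_neg (show τ < 0 by linarith),
        abs_of_neg (show τ+η < 0 by linarith),
        abs_of_pos (show (0:ℝ) < η by linarith)]
      refine ⟨by linarith, by linarith, by linarith, by linarith⟩
    · rw [abs_of_neg (show τ < 0 by linarith),
        abs_of_pos (show (0:ℝ) < τ+η by linarith),
        abs_of_pos (show (0:ℝ) < η by linarith)]
      refine ⟨by linarith, by linarith, by linarith, by linarith⟩
  obtain ⟨hte, het, he1, ht2⟩ := hfacts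
  set c1 : ℝ := |1-2*σ| * ((2/(e0 σ)^4) * (8 + Real.log (1+τ^2))) with hc1
  set c2 : ℝ := |1-2*(σ+ϑ)| * ((2/(e0 (σ+ϑ))^4) * (8 + Real.log (1+(τ+η)^2))) with hc2
  have hK1 := norm_Kfun_bounds σ τ hx11 hx12
  have hK2 := norm_Kfun_bounds (σ+ϑ) (τ+η) hx21 hx22
  have hsplit : ((σ:ℂ) + (τ:ℂ)*Complex.I) + ((ϑ:ℂ) + (η:ℂ)*Complex.I)
      = (((σ+ϑ:ℝ)):ℂ) + (((τ+η:ℝ)):ℂ)*Complex.I := by push_cast; ring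
  have hszre : (((σ:ℂ) + (τ:ℂ)*Complex.I) + ((ϑ:ℂ) + (η:ℂ)*Complex.I)).re = σ+ϑ := by
    rw [hsplit]; simp
  have hsz : σ+ϑ ≤ ‖((σ:ℂ) + (τ:ℂ)*Complex.I) + ((ϑ:ℂ) + (η:ℂ)*Complex.I)‖ := by
    calc σ+ϑ = (((σ:ℂ) + (τ:ℂ)*Complex.I) + ((ϑ:ℂ) + (η:ℂ)*Complex.I)).re := hszre.symm
      _ ≤ |(((σ:ℂ) + (τ:ℂ)*Complex.I) + ((ϑ:ℂ) + (η:ℂ)*Complex.I)).re| := le_abs_self _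
      _ ≤ ‖((σ:ℂ) + (τ:ℂ)*Complex.I) + ((ϑ:ℂ) + (η:ℂ)*Complex.I)‖ := by
          exact Complex.abs_re_le_norm _
  have hden := den_lb ϑ η he1
  have hPhi : ‖Phi ((σ:ℂ) + (τ:ℂ)*Complex.I) ((ϑ:ℂ) + (η:ℂ)*Complex.I)‖
      = ‖Kfun ((σ:ℂ) + (τ:ℂ)*Complex.I)‖
        / (‖((σ:ℂ) + (τ:ℂ)*Complex.I) + ((ϑ:ℂ) + (η:ℂ)*Complex.I)‖
            * ‖Kfun (((σ:ℂ) + (τ:ℂ)*Complex.I) + ((ϑ:ℂ) + (η:ℂ)*Complex.I))‖)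
        / ‖Complex.exp (Complex.I*(π:ℂ)*((ϑ:ℂ)+(η:ℂ)*Complex.I))
            - Complex.exp (-(Complex.I*(π:ℂ)*((ϑ:ℂ)+(η:ℂ)*Complex.I)))‖ := by
    simp only [Phi]
    rw [norm_div, norm_div, norm_mul]
  have hup1 : ‖Kfun ((σ:ℂ) + (τ:ℂ)*Complex.I)‖ ≤ Real.exp c1 := hK1.2
  have hlo2 : Real.exp (-c2) ≤ ‖Kfun (((σ:ℂ) + (τ:ℂ)*Complex.I) + ((ϑ:ℂ) + (η:ℂ)*Complex.I))‖ := by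
    rw [hsplit]; exact hK2.1
  have hdenpos : (0:ℝ) < (1/2)*Real.exp (π*|η|) := by positivity
  have hmidpos : (0:ℝ) < (σ+ϑ) * Real.exp (-c2) := by positivity
  have step1 : ‖Phi ((σ:ℂ) + (τ:ℂ)*Complex.I) ((ϑ:ℂ) + (η:ℂ)*Complex.I)‖
      ≤ Real.exp c1 / ((σ+ϑ) * Real.exp (-c2)) / ((1/2)*Real.exp (π*|η|)) := by
    rw [hPhi]
    have hmid : (σ+ϑ) * Real.exp (-c2)
        ≤ ‖((σ:ℂ) + (τ:ℂ)*Complex.I) + ((ϑ:ℂ) + (η:ℂ)*Complex.I)‖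
          * ‖Kfun (((σ:ℂ) + (τ:ℂ)*Complex.I) + ((ϑ:ℂ) + (η:ℂ)*Complex.I))‖ :=
      mul_le_mul hsz hlo2 (Real.exp_pos _).le (le_trans hσϑpos.le hsz)
    have hA : ‖Kfun ((σ:ℂ) + (τ:ℂ)*Complex.I)‖
        / (‖((σ:ℂ) + (τ:ℂ)*Complex.I) + ((ϑ:ℂ) + (η:ℂ)*Complex.I)‖
            * ‖Kfun (((σ:ℂ) + (τ:ℂ)*Complex.I) + ((ϑ:ℂ) + (η:ℂ)*Complex.I))‖)
        ≤ Real.exp c1 / ((σ+ϑ) * Real.exp (-c2)) :=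
      div_le_div₀ (Real.exp_pos c1).le hup1 hmidpos hmid
    exact div_le_div₀ (by positivity) hA hdenpos hden
  have hval : Real.exp c1 / ((σ+ϑ) * Real.exp (-c2)) / ((1/2)*Real.exp (π*|η|))
      = (2/(σ+ϑ)) * Real.exp (c1 + c2 - π*|η|) := by
    rw [Real.exp_sub, Real.exp_add, Real.exp_neg]
    field_simp
  have hRHSval : C * Real.exp (-(π/2 - π/4) * |η|) * Real.exp (-(π/4) * |τ|)
      = (2/(σ+ϑ)) * Real.exp ((8*S + 2*S*(Real.log W)) + (-(π/2 - π/4) * |η|) + (-(π/4) * |τ|)) := by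
    rw [hC, Real.exp_add ((8*S + 2*S*(Real.log W)) + (-(π/2 - π/4) * |η|)) (-(π/4) * |τ|),
      Real.exp_add (8*S + 2*S*(Real.log W)) (-(π/2 - π/4) * |η|)]
    ring
  set L : ℝ := Real.log (1+τ^2) with hLdef
  have hc12 : c1 + c2 ≤ 8*S + S*(2*Real.log W + 2*(|τ|/W)) := by
    have hc1' : c1 = B1 * (8 + L) := by rw [hc1, hB1, hLdef]; ring
    have hmono : Real.log (1+(τ+η)^2) ≤ L := by
      rw [hLdef]
      exact logmono_sq (le_trans hte (half_le_self (abs_nonneg τ)))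
    have hc2' : c2 ≤ B2 * (8 + L) := by
      rw [hc2, hB2]
      calc |1-2*(σ+ϑ)| * ((2/(e0 (σ+ϑ))^4) * (8 + Real.log (1+(τ+η)^2)))
          ≤ |1-2*(σ+ϑ)| * ((2/(e0 (σ+ϑ))^4) * (8 + L)) := by
            apply mul_le_mul_of_nonneg_left _ (abs_nonneg _)
            apply mul_le_mul_of_nonneg_left _ (by positivity)
            exact add_le_add_right hmono 8
        _ = |1-2*(σ+ϑ)| * (2/(e0 (σ+ϑ))^4) * (8 + L) := by ring
    have h1 : c1 + c2 ≤ (B1+B2)*(8+L) := by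
      calc c1 + c2 ≤ B1*(8+L) + B2*(8+L) := add_le_add (le_of_eq hc1') hc2'
        _ = (B1+B2)*(8+L) := by ring
    have h2 : (B1+B2)*(8+L) = 8*S + S*L := by rw [hS]; ring
    have h3 : L ≤ 2*Real.log W + 2*(|τ|/W) := by
      have := loglin W |τ| hW1 (abs_nonneg τ)
      rw [hLdef, ← _root_.sq_abs τ]
      exact this
    have h4 : S*L ≤ S*(2*Real.log W + 2*(|τ|/W)) := mul_le_mul_of_nonneg_left h3 hS0
    calc c1 + c2 ≤ 8*S + S*L := by rw [← h2]; exact h1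
      _ ≤ 8*S + S*(2*Real.log W + 2*(|τ|/W)) := add_le_add_right h4 _
  have hexp : c1 + c2 - π*|η| ≤ (8*S + 2*S*(Real.log W)) + (-(π/2 - π/4) * |η|) + (-(π/4) * |τ|) :=
    hexp_outer S W (c1+c2) |η| |τ| hS0 hW1 hWS (abs_nonneg τ) hc12 het
  calc ‖Phi ((σ:ℂ) + (τ:ℂ)*Complex.I) ((ϑ:ℂ) + (η:ℂ)*Complex.I)‖
      ≤ Real.exp c1 / ((σ+ϑ) * Real.exp (-c2)) / ((1/2)*Real.exp (π*|η|)) := step1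
    _ = (2/(σ+ϑ)) * Real.exp (c1 + c2 - π*|η|) := hval
    _ ≤ (2/(σ+ϑ)) * Real.exp ((8*S + 2*S*(Real.log W)) + (-(π/2 - π/4) * |η|) + (-(π/4) * |τ|)) := by
        apply mul_le_mul_of_nonneg_left (Real.exp_le_exp.mpr hexp) (by positivity)
    _ = C * Real.exp (-(π/2 - π/4) * |η|) * Real.exp (-(π/4) * |τ|) := hRHSval.symm
end

section
/- Let ϑ ∈ (0,1) and σ ∈ (max{−1/2, −ϑ}, 3/2 − ϑ), and let ω(λ) = λ·cot(λπ). There exists M₀ > 0 such that for all M ≥ M₀ there is a constant C = C(M, σ, ϑ) with |exp(−τ·arg ω(s) + (τ+η)·arg ω(s+ζ))| ≤ C whenever s = σ + iτ, ζ = ϑ + iη and (η,τ) ∈ Σ₂′ ∪ Σ₂″, where Σ₂′ = {η > 0, τ > 2M} and Σ₂″ = {−τ/2 < η < 0, τ > 2M}. In fact, both |η·arg ω(s+ζ)| and |τ·(arg ω(s+ζ) − arg ω(s))| are bounded by constants depending only on M, σ, ϑ on Σ₂′ ∪ Σ₂″. -/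
open Complex Filter Real

lemma abs_le_abs_tan {x : ℝ} (h : |x| < π/2) : |x| ≤ |Real.tan x| := by
  rcases lt_trichotomy x 0 with hx | rfl | hx
  · have hx2 : -x < π/2 := by rwa [abs_of_neg hx] at h
    have h2 := (Real.lt_tan (by linarith) hx2).le
    rw [Real.tan_neg] at h2
    rw [abs_of_neg hx]
    exact h2.trans ((le_abs_self _).trans (abs_neg _).le)
  · simp
  · have hx2 : x < π/2 := by rwa [abs_of_pos hx] at h
    rw [abs_of_pos hx]
    exact (Real.lt_tan hx hx2).le.trans (le_abs_self _)

lemma arg_omega_bound (a b : ℝ) (ha : |a| ≤ 3) (hb : 2 ≤ b) :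
    |Complex.arg (omegaFun ((a:ℂ) + (b:ℂ)*I))| ≤ 8 / b := by
  have hbpos : (0:ℝ) < b := by linarith
  set l : ℂ := (a:ℂ) + (b:ℂ)*I with hl
  by_cases hs : Complex.sin (l * (π:ℂ)) = 0
  · rw [omegaFun, Complex.cot_eq_cos_div_sin, hs, div_zero, mul_zero, Complex.arg_zero,
      abs_zero]
    positivity
  · set E : ℂ := Complex.exp (l * (π:ℂ) * I) with hE
    have hE0 : E ≠ 0 := Complex.exp_ne_zero _
    have hEabs : ‖E‖ = Real.exp (-(π*b)) := by
      rw [hE, Complex.norm_exp]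
      congr 1
      simp [hl, Complex.mul_re, Complex.mul_im]
      ring
    have hu2 : ‖E^2‖ = Real.exp (-(2*π*b)) := by
      rw [norm_pow, hEabs, ← Real.exp_nat_mul]
      norm_num
      ring_nf
    have hπ : (3:ℝ) < π := Real.pi_gt_three
    have hexp : Real.exp (-(2*π*b)) ≤ 1/(9*b^2) := by
      rw [Real.exp_neg, one_div, inv_le_inv₀ (Real.exp_pos _) (by positivity)]
      have h1 : π*b + 1 ≤ Real.exp (π*b) := Real.add_one_le_exp _
      have h2 : Real.exp (2*π*b) = Real.exp (π*b) * Real.exp (π*b) := by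
        rw [← Real.exp_add]; ring_nf
      have h3 : (π*b+1)*(π*b+1) ≤ Real.exp (π*b) * Real.exp (π*b) :=
        mul_le_mul h1 h1 (by positivity) (le_trans (by positivity) h1)
      have h9 : (9:ℝ) ≤ π*π := by nlinarith
      have h10 : 9*b^2 ≤ (π*b)*(π*b) := by nlinarith
      nlinarith
    have hu2le : ‖E^2‖ ≤ 1/(9*b^2) := hu2 ▸ hexp
    have hu2small : ‖E^2‖ ≤ 1/36 := by
      refine hu2le.trans (one_div_le_one_div_of_le (by norm_num) (by nlinarith))
    have h1mu : (1:ℝ)/2 ≤ ‖1 - E^2‖ := by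
      have h3 := norm_sub_norm_le (1:ℂ) (E^2)
      simp only [norm_one] at h3
      linarith
    have h1mu0 : (1:ℂ) - E^2 ≠ 0 := by
      intro h0
      rw [h0, norm_zero] at h1mu
      linarith
    -- the identity
    have hba : ((b:ℂ) - I*(a:ℂ)) = -I * l := by
      rw [hl]
      apply Complex.ext <;> simp
    have hexpneg : Complex.exp (-(l * (π:ℂ)) * I) = E⁻¹ := by
      rw [hE, ← Complex.exp_neg]
      ring_nf
    have hnum : Complex.cos (l*(π:ℂ)) * (1 - E^2) = (-I) * (1 + E^2) * Complex.sin (l*(π:ℂ)) := by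
      rw [Complex.sin, Complex.cos, hexpneg, ← hE]
      field_simp
      ring_nf
      simp [Complex.I_sq]
      ring
    have hcot : Complex.cot (l*(π:ℂ)) = (-I) * (1 + E^2) / (1 - E^2) := by
      rw [Complex.cot_eq_cos_div_sin, div_eq_div_iff hs h1mu0]
      rw [hnum]
    have homega : omegaFun l = ((b:ℂ) - I*(a:ℂ)) * ((1 + E^2) / (1 - E^2)) := by
      rw [omegaFun, hcot, hba]
      ring
    have hδ : omegaFun l - ((b:ℂ) - I*(a:ℂ)) = ((b:ℂ) - I*(a:ℂ)) * (2*E^2/(1-E^2)) := by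
      rw [homega]
      field_simp
      ring
    have hz0abs : ‖(b:ℂ) - I*(a:ℂ)‖ ≤ b + 3 := by
      refine (norm_sub_le _ _).trans ?_
      rw [norm_mul, Complex.norm_I, Complex.norm_real, Complex.norm_real,
        Real.norm_eq_abs, Real.norm_eq_abs, abs_of_pos hbpos, one_mul]
      linarith
    have hδabs : ‖omegaFun l - ((b:ℂ) - I*(a:ℂ))‖ ≤ 10/(9*b) := by
      rw [hδ, norm_mul, norm_div, norm_mul]
      have h5 : ‖(2:ℂ)‖ = 2 := by norm_num
      rw [h5]
      have hA := norm_nonneg (E^2)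
      have hz0nn := norm_nonneg ((b:ℂ) - I*(a:ℂ))
      have h6 : 2 * ‖E^2‖ / ‖1 - E^2‖ ≤ 4 * ‖E^2‖ := by
        rw [div_le_iff₀ (by linarith)]
        nlinarith
      calc ‖(b:ℂ) - I*(a:ℂ)‖ * (2 * ‖E^2‖ / ‖1 - E^2‖)
          ≤ (b + 3) * (4 * ‖E^2‖) :=
            mul_le_mul hz0abs h6 (by positivity) (by linarith)
        _ ≤ (b + 3) * (4 * (1/(9*b^2))) := by nlinarith
        _ ≤ 10/(9*b) := by
            have heq : (b + 3) * (4 * (1/(9*b^2))) = (4*b+12)/(9*b^2) := by ring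
            rw [heq, div_le_div_iff₀ (by positivity) (by positivity)]
            nlinarith
    have hreim : ∀ w : ℂ, |w.re| ≤ ‖w‖ ∧ |w.im| ≤ ‖w‖ :=
      fun w => ⟨Complex.abs_re_le_norm w, Complex.abs_im_le_norm w⟩
    have hre0 : ((b:ℂ) - I*(a:ℂ)).re = b := by simp
    have him0 : ((b:ℂ) - I*(a:ℂ)).im = -a := by simp
    have hdre := (hreim (omegaFun l - ((b:ℂ) - I*(a:ℂ)))).1
    have hdim := (hreim (omegaFun l - ((b:ℂ) - I*(a:ℂ)))).2
    rw [Complex.sub_re, hre0] at hdre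
    rw [Complex.sub_im, him0] at hdim
    have habs' : 10/(9*b) ≤ 5/9 := by
      rw [div_le_div_iff₀ (by positivity) (by norm_num)]
      nlinarith
    have hrehalf : b/2 ≤ (omegaFun l).re := by
      have := abs_le.mp (hdre.trans (hδabs.trans habs'))
      linarith
    have hrepos : 0 < (omegaFun l).re := by linarith
    have himb : |(omegaFun l).im| ≤ 4 := by
      have h7 := abs_le.mp (hdim.trans (hδabs.trans habs'))
      have h8 := abs_le.mp ha
      rw [abs_le]
      constructor <;> linarith
    have hargsmall : |(omegaFun l).arg| < π/2 :=
      Complex.abs_arg_lt_pi_div_two_iff.mpr (Or.inl hrepos)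
    calc |(omegaFun l).arg| ≤ |Real.tan (omegaFun l).arg| := abs_le_abs_tan hargsmall
      _ = |(omegaFun l).im / (omegaFun l).re| := by rw [Complex.tan_arg]
      _ = |(omegaFun l).im| / (omegaFun l).re := by
          rw [abs_div, abs_of_pos hrepos]
      _ ≤ 4 / (b/2) := div_le_div₀ (by norm_num) himb (by linarith) hrehalf
      _ = 8 / b := by
          rw [div_div_eq_mul_div]
          norm_num

/-- for `ϑ ∈ (0,1)`, `σ ∈ (max{-1/2,-ϑ}, 3/2-ϑ)` and `ω(λ) = λ·cot(λπ)`
there is `M₀ > 0` such that for all `M ≥ M₀` there is `C = C(M,σ,ϑ) > 0` with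
`|exp(-τ·arg ω(s) + (τ+η)·arg ω(s+ζ))| ≤ C` whenever `s = σ+iτ`, `ζ = ϑ+iη` and
`(η,τ) ∈ Σ₂′ ∪ Σ₂″`, where `Σ₂′ = {η > 0, τ > 2M}` and `Σ₂″ = {-τ/2 < η < 0, τ > 2M}`.
In fact both `|η·arg ω(s+ζ)|` and `|τ·(arg ω(s+ζ) - arg ω(s))|` are bounded by
constants depending only on `M, σ, ϑ` there. -/
theorem stmt13 (ϑ σ : ℝ) (hϑ : ϑ ∈ Set.Ioo (0:ℝ) 1)
    (hσ : σ ∈ Set.Ioo (max (-1/2) (-ϑ)) (3/2 - ϑ)) :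
    ∃ M₀ > (0 : ℝ), ∀ M ≥ M₀, ∃ C > (0 : ℝ), ∀ τ η : ℝ,
      ((0 < η ∧ 2 * M < τ) ∨ (-τ/2 < η ∧ η < 0 ∧ 2 * M < τ)) →
      (Real.exp (-τ * Complex.arg (omegaFun ((σ : ℂ) + (τ : ℂ) * Complex.I)) +
          (τ + η) * Complex.arg (omegaFun (((σ : ℂ) + (τ : ℂ) * Complex.I) +
            ((ϑ : ℂ) + (η : ℂ) * Complex.I)))) ≤ C) ∧
      |η * Complex.arg (omegaFun (((σ : ℂ) + (τ : ℂ) * Complex.I) +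
          ((ϑ : ℂ) + (η : ℂ) * Complex.I)))| ≤ C ∧
      |τ * (Complex.arg (omegaFun (((σ : ℂ) + (τ : ℂ) * Complex.I) +
            ((ϑ : ℂ) + (η : ℂ) * Complex.I))) -
          Complex.arg (omegaFun ((σ : ℂ) + (τ : ℂ) * Complex.I)))| ≤ C := by

  obtain ⟨hϑ0, hϑ1⟩ := hϑ
  obtain ⟨hσl, hσr⟩ := hσ
  obtain ⟨hσl1, hσl2⟩ := max_lt_iff.mp hσl
  refine ⟨2, by norm_num, fun M hM => ⟨Real.exp 32, Real.exp_pos _, fun τ η hreg => ?_⟩⟩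
  have hτ4 : 4 < τ := by rcases hreg with ⟨_, h⟩ | ⟨_, _, h⟩ <;> linarith
  have hb1 : 2 ≤ τ := by linarith
  have hb2 : 2 ≤ τ + η := by rcases hreg with ⟨h1, h2⟩ | ⟨h1, h2, h3⟩ <;> linarith
  have hηle : |η| ≤ τ + η := by
    rcases hreg with ⟨h1, h2⟩ | ⟨h1, h2, h3⟩
    · rw [abs_of_pos h1]; linarith
    · rw [abs_of_neg h2]; linarith
  have hτle : τ ≤ 2 * (τ + η) := by
    rcases hreg with ⟨h1, h2⟩ | ⟨h1, h2, h3⟩ <;> linarith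
  have haσ : |σ| ≤ 3 := by rw [abs_le]; constructor <;> linarith
  have haσϑ : |σ + ϑ| ≤ 3 := by rw [abs_le]; constructor <;> linarith
  have hA1 := arg_omega_bound σ τ haσ hb1
  have hA2 := arg_omega_bound (σ + ϑ) (τ + η) haσϑ hb2
  have hcast : ((σ : ℂ) + (τ : ℂ) * I) + ((ϑ : ℂ) + (η : ℂ) * I)
      = (((σ + ϑ : ℝ)) : ℂ) + (((τ + η : ℝ)) : ℂ) * I := by push_cast; ring
  rw [hcast]
  set A1 := Complex.arg (omegaFun ((σ : ℂ) + (τ : ℂ) * I)) with hA1def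
  set A2 := Complex.arg (omegaFun ((((σ + ϑ : ℝ)) : ℂ) + (((τ + η : ℝ)) : ℂ) * I)) with hA2def
  have hτpos : (0:ℝ) < τ := by linarith
  have hbp : (0:ℝ) < τ + η := by linarith
  have hT1 : |τ * A1| ≤ 8 := by
    rw [abs_mul, abs_of_pos hτpos]
    calc τ * |A1| ≤ τ * (8 / τ) := mul_le_mul_of_nonneg_left hA1 hτpos.le
      _ = 8 := by field_simp
  have hT2 : |τ * A2| ≤ 16 := by
    rw [abs_mul, abs_of_pos hτpos]
    calc τ * |A2| ≤ τ * (8 / (τ + η)) := mul_le_mul_of_nonneg_left hA2 hτpos.le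
      _ ≤ 16 := by
        rw [mul_div_assoc'] at *
        rw [div_le_iff₀ hbp]
        linarith
  have hH2 : |η * A2| ≤ 8 := by
    rw [abs_mul]
    calc |η| * |A2| ≤ (τ + η) * (8 / (τ + η)) :=
        mul_le_mul hηle hA2 (abs_nonneg _) hbp.le
      _ = 8 := by field_simp
  obtain ⟨l1, r1⟩ := abs_le.mp hT1
  obtain ⟨l2, r2⟩ := abs_le.mp hT2
  obtain ⟨l3, r3⟩ := abs_le.mp hH2
  have hC : (32:ℝ) + 1 ≤ Real.exp 32 := Real.add_one_le_exp 32
  refine ⟨?_, ?_, ?_⟩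
  · exact Real.exp_le_exp.mpr (by nlinarith)
  · linarith
  · have heq : τ * (A2 - A1) = τ * A2 - τ * A1 := by ring
    rw [heq]
    have := abs_sub (τ * A2) (τ * A1)
    calc |τ * A2 - τ * A1| ≤ |τ * A2| + |τ * A1| := by exact abs_sub _ _
      _ ≤ Real.exp 32 := by linarith
end
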